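/- arXiv:2312.10413 — 6 statements merged into one kernel-verified Lean document; each statement's English description precedes it below -/
import Mathlib

section
/- Let k >= 1. A self-complementary split graph G on 4k vertices has a unique split partition, namely K = {v : d(v) >= 2k} and I = {v : d(v) < 2k}, where d(v) denotes the degree of v in G. -/
open SimpleGraph

/-- The degree of a vertex, as the cardinality of its neighbor set. -/
noncomputable def deg {V : Type*} (G : SimpleGraph V) (v : V) : ℕ := (G.neighborSet v).ncard

/-- The degree sequence of a finite graph, as a multiset (which determines the
non-increasing sequence of vertex degrees). -/
noncomputable def degMultiset {V : Type*} [Finite V] (G : SimpleGraph V) : Multiset ℕ :=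
  letI := Fintype.ofFinite V
  Finset.univ.val.map fun v => deg G v

/-- A graph is self-complementary if it is isomorphic to its complement. -/
def IsSelfCompl {V : Type*} (G : SimpleGraph V) : Prop := Nonempty (G ≃g Gᶜ)

/-- A degree sequence is forcibly self-complementary if every realization of it
is self-complementary. -/
def ForciblySC (τ : Multiset ℕ) : Prop :=
  ∀ G : SimpleGraph (Fin (Multiset.card τ)), degMultiset G = τ → IsSelfCompl G

/-- A split partition: a partition of the vertex set into a clique `K` and an
independent set `I`. -/
def IsSplitPartition {V : Type*} (G : SimpleGraph V) (K I : Set V) : Prop :=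
  Disjoint K I ∧ K ∪ I = Set.univ ∧ G.IsClique K ∧ ∀ u ∈ I, ∀ v ∈ I, ¬ G.Adj u v

/-- A split graph: a graph admitting a split partition. -/
def IsSplit {V : Type*} (G : SimpleGraph V) : Prop := ∃ K I, IsSplitPartition G K I

lemma deg_add_one_le {V : Type*} [Finite V] (G : SimpleGraph V) (v : V) :
    deg G v + 1 ≤ Nat.card V := by
  have hv : v ∉ G.neighborSet v := fun h => G.loopless.irrefl v h
  have h : (insert v (G.neighborSet v)).ncard ≤ Nat.card V := by
    rw [← Set.ncard_univ]
    exact Set.ncard_le_ncard (Set.subset_univ _)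
  rw [Set.ncard_insert_of_notMem hv] at h
  exact h

lemma compl_neighborSet_eq {V : Type*} (G : SimpleGraph V) (v : V) :
    Gᶜ.neighborSet v = (insert v (G.neighborSet v))ᶜ := by
  ext w
  simp [compl_adj, mem_neighborSet, eq_comm, and_comm, not_or]

lemma deg_compl {V : Type*} [Finite V] (G : SimpleGraph V) (v : V) :
    deg Gᶜ v = Nat.card V - 1 - deg G v := by
  have hv : v ∉ G.neighborSet v := fun h => G.loopless.irrefl v h
  have h1 : (insert v (G.neighborSet v)).ncard + (insert v (G.neighborSet v))ᶜ.ncard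
      = Nat.card V := Set.ncard_add_ncard_compl _
  rw [Set.ncard_insert_of_notMem hv] at h1
  have h2 := deg_add_one_le G v
  simp only [deg] at h2 ⊢
  rw [compl_neighborSet_eq]
  omega

lemma deg_map {V : Type*} {G H : SimpleGraph V} (e : G ≃g H) (v : V) :
    deg H (e v) = deg G v := by
  have h : H.neighborSet (e v) = ⇑e '' G.neighborSet v := by
    ext w
    constructor
    · intro hw
      refine ⟨e.symm w, ?_, by simp⟩
      have : H.Adj (e v) (e (e.symm w)) := by simpa using hw
      exact (e.map_adj_iff.mp this)
    · rintro ⟨u, hu, rfl⟩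
      exact e.map_adj_iff.mpr hu
  rw [deg, deg, h]
  exact Set.ncard_image_of_injective _ e.toEquiv.injective

/-- For `k ≥ 1`, a self-complementary split graph `G` on `4k` vertices
has a unique split partition, namely `K = {v : d(v) ≥ 2k}` and `I = {v : d(v) < 2k}`. -/
theorem unique_split_partition (k : ℕ) (hk : 1 ≤ k) (G : SimpleGraph (Fin (4 * k)))
    (hsplit : IsSplit G) (hsc : IsSelfCompl G) :
    IsSplitPartition G {v | 2 * k ≤ deg G v} {v | deg G v < 2 * k} ∧
    ∀ K I : Set (Fin (4 * k)), IsSplitPartition G K I →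
      K = {v | 2 * k ≤ deg G v} ∧ I = {v | deg G v < 2 * k} := by
  obtain ⟨e⟩ := hsc
  have hcard : Nat.card (Fin (4 * k)) = 4 * k := by simp
  have hdle : ∀ v, deg G v + 1 ≤ 4 * k := fun v => by
    have h := deg_add_one_le G v; rwa [hcard] at h
  have hdeg_e : ∀ v, deg G (e v) = 4 * k - 1 - deg G v := by
    intro v
    have h1 : deg Gᶜ (e v) = deg G v := deg_map e v
    have h2 : deg Gᶜ (e v) = 4 * k - 1 - deg G (e v) := by rw [deg_compl, hcard]
    have h3 := hdle (e v); have h4 := hdle v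
    omega
  set S : Set (Fin (4 * k)) := {v | 2 * k ≤ deg G v} with hSdef
  have hScompl : Sᶜ = {v | deg G v < 2 * k} := by
    ext v; simp [hSdef, not_le]
  have hinj : Function.Injective (⇑e) := e.toEquiv.injective
  have himg1 : ⇑e '' S ⊆ Sᶜ := by
    rintro _ ⟨v, hv, rfl⟩
    have h1 := hdeg_e v; have h2 := hdle v
    simp only [hSdef, Set.mem_setOf_eq] at hv
    rw [hScompl]; simp only [Set.mem_setOf_eq]
    omega
  have himg2 : ⇑e '' Sᶜ ⊆ S := by
    rintro _ ⟨v, hv, rfl⟩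
    have h1 := hdeg_e v; have h2 := hdle v
    rw [hScompl] at hv
    simp only [Set.mem_setOf_eq] at hv
    simp only [hSdef, Set.mem_setOf_eq]
    omega
  have hle1 : S.ncard ≤ Sᶜ.ncard := by
    have h := Set.ncard_le_ncard himg1 (Set.toFinite _)
    rwa [Set.ncard_image_of_injective _ hinj] at h
  have hle2 : Sᶜ.ncard ≤ S.ncard := by
    have h := Set.ncard_le_ncard himg2 (Set.toFinite _)
    rwa [Set.ncard_image_of_injective _ hinj] at h
  have hsum : S.ncard + Sᶜ.ncard = 4 * k := by
    rw [Set.ncard_add_ncard_compl, hcard]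
  have hScard : S.ncard = 2 * k := by omega
  have hSccard : Sᶜ.ncard = 2 * k := by omega
  have main : ∀ K I : Set (Fin (4 * k)), IsSplitPartition G K I → K = S ∧ I = Sᶜ := by
    rintro K I ⟨hdisj, hunion, hclique, hindep⟩
    have hIc : I = Kᶜ := by
      ext v
      constructor
      · intro hv hvK; exact Set.disjoint_left.mp hdisj hvK hv
      · intro hv
        have hm : v ∈ K ∪ I := hunion ▸ Set.mem_univ v
        rcases hm with h | h
        · exact absurd h hv
        · exact h
    have hKI : K.ncard + I.ncard = 4 * k := by
      rw [← Set.ncard_union_eq hdisj (Set.toFinite _) (Set.toFinite _), hunion,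
        Set.ncard_univ, hcard]
    have hKsub : ∀ v ∈ K, K \ {v} ⊆ G.neighborSet v := by
      intro v hv w hw
      obtain ⟨hwK, hwv⟩ := hw
      have hne : w ≠ v := by simpa using hwv
      exact (hclique hwK hv hne).symm
    have hKdeg : ∀ v ∈ K, K.ncard ≤ deg G v + 1 := by
      intro v hv
      have h := Set.ncard_le_ncard (hKsub v hv) (Set.toFinite _)
      rw [Set.ncard_diff_singleton_of_mem hv] at h
      simp only [deg]
      omega
    have hIdeg : ∀ u ∈ I, G.neighborSet u ⊆ K := by
      intro u hu w hw
      by_contra hwK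
      have hwI : w ∈ I := by rw [hIc]; exact hwK
      exact hindep u hu w hwI hw
    have hKle : K.ncard ≤ 2 * k := by
      by_contra h
      push_neg at h
      have hKS : K ⊆ S := by
        intro v hv
        have := hKdeg v hv
        simp only [hSdef, Set.mem_setOf_eq]
        omega
      have := Set.ncard_le_ncard hKS (Set.toFinite _)
      omega
    have hIle : I.ncard ≤ 2 * k := by
      by_contra h
      push_neg at h
      have hIS : I ⊆ Sᶜ := by
        intro u hu
        have h1 := Set.ncard_le_ncard (hIdeg u hu) (Set.toFinite _)
        rw [hScompl]
        simp only [Set.mem_setOf_eq]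
        simp only [deg]
        omega
      have := Set.ncard_le_ncard hIS (Set.toFinite _)
      omega
    have hKcard : K.ncard = 2 * k := by omega
    have hIcard : I.ncard = 2 * k := by omega
    have hKS : K ⊆ S := by
      intro v hv
      by_contra hvS
      simp only [hSdef, Set.mem_setOf_eq, not_le] at hvS
      have hdiffcard : (K \ {v}).ncard = 2 * k - 1 := by
        rw [Set.ncard_diff_singleton_of_mem hv, hKcard]
      have heq : K \ {v} = G.neighborSet v := by
        refine Set.eq_of_subset_of_ncard_le (hKsub v hv) ?_ (Set.toFinite _)
        have : (G.neighborSet v).ncard = deg G v := rfl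
        omega
      have hIsmall : ∀ u ∈ I, deg G u < 2 * k := by
        intro u hu
        have hnsub : G.neighborSet u ⊆ K \ {v} := by
          intro w hw
          refine ⟨hIdeg u hu hw, ?_⟩
          intro hwv
          rw [Set.mem_singleton_iff] at hwv
          subst hwv
          have hadj : G.Adj u w := hw
          have h2 : u ∈ G.neighborSet w := hadj.symm
          rw [← heq] at h2
          exact Set.disjoint_left.mp hdisj h2.1 hu
        have h1 := Set.ncard_le_ncard hnsub (Set.toFinite _)
        simp only [deg]
        omega
      have hvI : v ∉ I := fun h => Set.disjoint_left.mp hdisj hv h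
      have hins : insert v I ⊆ Sᶜ := by
        intro u hu
        rw [hScompl]
        rcases hu with rfl | hu
        · exact hvS
        · exact hIsmall u hu
      have h1 := Set.ncard_le_ncard hins (Set.toFinite _)
      rw [Set.ncard_insert_of_notMem hvI] at h1
      omega
    have hKeq : K = S :=
      Set.eq_of_subset_of_ncard_le hKS (by omega) (Set.toFinite _)
    refine ⟨hKeq, ?_⟩
    rw [hIc, hKeq]
  constructor
  · obtain ⟨K, I, h⟩ := hsplit
    obtain ⟨hK, hI⟩ := main K I h
    rw [hK, hI] at h
    rw [show ({v | deg G v < 2 * k} : Set (Fin (4 * k))) = Sᶜ from hScompl.symm]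
    exact h
  · intro K I h
    obtain ⟨hK, hI⟩ := main K I h
    exact ⟨hK, hI.trans hScompl⟩
end

section
/- Let G be a split graph on 4k+1 vertices. If G is self-complementary, then G has exactly one vertex v of degree 2k, and the induced subgraph G - v is also self-complementary. -/
open SimpleGraph

lemma deg_eq_degree {V : Type*} [Fintype V] (G : SimpleGraph V) [DecidableRel G.Adj] (v : V) :
    deg G v = G.degree v := by
  rw [deg, Set.ncard_eq_toFinset_card']; rfl

lemma deg_iso {V W : Type*} {G : SimpleGraph V} {H : SimpleGraph W} (e : G ≃g H) (v : V) :
    deg H (e v) = deg G v := by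
  rw [deg, deg, ← Nat.card_coe_set_eq, ← Nat.card_coe_set_eq]
  exact Nat.card_congr (e.mapNeighborSet v).symm

lemma deg_compl_add {V : Type*} [Fintype V] (G : SimpleGraph V) (v : V) :
    deg Gᶜ v + deg G v = Fintype.card V - 1 := by
  classical
  rw [deg_eq_degree, deg_eq_degree, SimpleGraph.degree_compl]
  have h : G.degree v < Fintype.card V := G.degree_lt_card_verts v
  omega

lemma count_eq (k : ℕ) (G : SimpleGraph (Fin (4*k+1))) (σ : G ≃g Gᶜ) :
    {v | deg G v < 2*k}.ncard = {v | 2*k < deg G v}.ncard := by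
  have hc : ∀ w, deg Gᶜ w + deg G w = 4*k := by
    intro w; have := deg_compl_add G w; simpa using this
  have himg : ⇑σ '' {v | 2*k < deg G v} = {v | deg G v < 2*k} := by
    ext w
    simp only [Set.mem_image, Set.mem_setOf_eq]
    constructor
    · rintro ⟨v, hv, rfl⟩
      have h1 : deg Gᶜ (σ v) = deg G v := deg_iso σ v
      have h2 := hc (σ v)
      have h3 := hc v
      omega
    · intro hw
      refine ⟨σ.symm w, ?_, by simp⟩
      have h1 : deg Gᶜ (σ (σ.symm w)) = deg G (σ.symm w) := deg_iso σ _
      rw [RelIso.apply_symm_apply] at h1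
      have h2 := hc w
      omega
  rw [← himg, Set.ncard_image_of_injective _ σ.injective]

lemma indep_bound {V : Type*} [Finite V] {G : SimpleGraph V} {K I : Set V}
    (hp : IsSplitPartition G K I) {S : Set V}
    (hS : ∀ u ∈ S, ∀ w ∈ S, u ≠ w → ¬ G.Adj u w) :
    S.ncard ≤ I.ncard + 1 := by
  obtain ⟨hdisj, huniv, hclique, hindep⟩ := hp
  have hsub : S ⊆ (S ∩ K) ∪ I := by
    intro x hx
    rcases (by rw [huniv]; trivial : x ∈ K ∪ I) with h | h
    · exact Or.inl ⟨hx, h⟩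
    · exact Or.inr h
  calc S.ncard ≤ ((S ∩ K) ∪ I).ncard := Set.ncard_le_ncard hsub (Set.toFinite _)
    _ ≤ (S ∩ K).ncard + I.ncard := Set.ncard_union_le _ _
    _ ≤ 1 + I.ncard := by
        gcongr
        rw [Set.ncard_le_one (Set.toFinite _)]
        rintro a ⟨haS, haK⟩ b ⟨hbS, hbK⟩
        by_contra hne
        exact hS a haS b hbS hne (hclique haK hbK hne)
    _ = I.ncard + 1 := by omega

lemma clique_bound {V : Type*} [Finite V] {G : SimpleGraph V} {K I : Set V}
    (hp : IsSplitPartition G K I) {S : Set V} (hS : G.IsClique S) :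
    S.ncard ≤ K.ncard + 1 := by
  obtain ⟨hdisj, huniv, hclique, hindep⟩ := hp
  have hsub : S ⊆ (S ∩ I) ∪ K := by
    intro x hx
    rcases (by rw [huniv]; trivial : x ∈ K ∪ I) with h | h
    · exact Or.inr h
    · exact Or.inl ⟨hx, h⟩
  calc S.ncard ≤ ((S ∩ I) ∪ K).ncard := Set.ncard_le_ncard hsub (Set.toFinite _)
    _ ≤ (S ∩ I).ncard + K.ncard := Set.ncard_union_le _ _
    _ ≤ 1 + K.ncard := by
        gcongr
        rw [Set.ncard_le_one (Set.toFinite _)]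
        rintro a ⟨haS, haI⟩ b ⟨hbS, hbI⟩
        by_contra hne
        exact hindep a haI b hbI (hS haS hbS hne)
    _ = K.ncard + 1 := by omega

lemma image_isClique_of_indep {V : Type*} {G : SimpleGraph V} (σ : G ≃g Gᶜ) {S : Set V}
    (hS : ∀ u ∈ S, ∀ w ∈ S, u ≠ w → ¬ G.Adj u w) : G.IsClique (⇑σ '' S) := by
  rintro _ ⟨a, ha, rfl⟩ _ ⟨b, hb, rfl⟩ hne
  have hab : a ≠ b := fun h => hne (by rw [h])
  have h2 : ¬ Gᶜ.Adj (σ a) (σ b) := by rw [σ.map_rel_iff]; exact hS a ha b hb hab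
  rw [compl_adj, not_and, not_not] at h2
  exact h2 hne

lemma image_indep_of_isClique {V : Type*} {G : SimpleGraph V} (σ : G ≃g Gᶜ) {S : Set V}
    (hS : G.IsClique S) : ∀ u ∈ ⇑σ '' S, ∀ w ∈ ⇑σ '' S, u ≠ w → ¬ G.Adj u w := by
  rintro _ ⟨a, ha, rfl⟩ _ ⟨b, hb, rfl⟩ hne hadj
  have hab : a ≠ b := fun h => hne (by rw [h])
  have h2 : Gᶜ.Adj (σ a) (σ b) := σ.map_rel_iff.mpr (hS ha hb hab)
  rw [compl_adj] at h2
  exact h2.2 hadj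

lemma key (k : ℕ) (G : SimpleGraph (Fin (4*k+1))) (σ : G ≃g Gᶜ)
    {K I : Set (Fin (4*k+1))} (hp : IsSplitPartition G K I)
    (hKc : K.ncard = 2*k+1) :
    ∃! v, deg G v = 2*k := by
  obtain ⟨hdisj, huniv, hclique, hindep⟩ := hp
  have hcardsum : K.ncard + I.ncard = 4*k+1 := by
    rw [← Set.ncard_union_eq hdisj (Set.toFinite _) (Set.toFinite _), huniv, Set.ncard_univ]
    simp
  have hIc : I.ncard = 2*k := by omega
  have hInb : ∀ u ∈ I, G.neighborSet u ⊆ K := by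
    intro u hu w hw
    rcases (by rw [huniv]; trivial : w ∈ K ∪ I) with h | h
    · exact h
    · exact absurd hw (hindep u hu w h)
  have hIdeg : ∀ u ∈ I, deg G u ≤ 2*k := by
    intro u hu
    have h1 : deg G u ≤ 2*k+1 := by
      rw [deg, ← hKc]; exact Set.ncard_le_ncard (hInb u hu) (Set.toFinite _)
    rcases Nat.lt_or_ge (deg G u) (2*k+1) with h | h
    · omega
    · exfalso
      have heq : G.neighborSet u = K :=
        Set.eq_of_subset_of_ncard_le (hInb u hu) (by rw [hKc]; rw [deg] at h; omega)
          (Set.toFinite _)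
      have hcl : G.IsClique (insert u K) := by
        rw [SimpleGraph.isClique_insert]
        refine ⟨hclique, fun b hb hne => ?_⟩
        have : b ∈ G.neighborSet u := heq ▸ hb
        exact this
      have hb := indep_bound ⟨hdisj, huniv, hclique, hindep⟩ (image_indep_of_isClique σ hcl)
      rw [Set.ncard_image_of_injective _ σ.injective] at hb
      have hu_notin : u ∉ K := fun hk => Set.disjoint_left.mp hdisj hk hu
      rw [Set.ncard_insert_of_notMem hu_notin (Set.toFinite _), hKc] at hb
      omega
  have hKdeg : ∀ v ∈ K, 2*k ≤ deg G v := by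
    intro v hv
    have hsub : K \ {v} ⊆ G.neighborSet v := by
      rintro w hw
      rw [Set.mem_diff, Set.mem_singleton_iff] at hw
      exact hclique hv hw.1 (fun h => hw.2 h.symm)
    have h1 := Set.ncard_le_ncard hsub (Set.toFinite _)
    rw [Set.ncard_diff_singleton_of_mem hv, hKc] at h1
    rw [deg]; omega
  set A : Set (Fin (4*k+1)) := {v | deg G v = 2*k} with hA
  have hBig : {v | 2*k < deg G v} = K \ A := by
    ext v
    simp only [Set.mem_setOf_eq, Set.mem_diff, hA]
    constructor
    · intro h
      have hvK : v ∈ K := by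
        rcases (by rw [huniv]; trivial : v ∈ K ∪ I) with hh | hh
        · exact hh
        · exact absurd (hIdeg v hh) (by omega)
      exact ⟨hvK, by omega⟩
    · rintro ⟨hvK, hvA⟩
      have := hKdeg v hvK
      omega
  have hSmall : {v | deg G v < 2*k} = I \ A := by
    ext v
    simp only [Set.mem_setOf_eq, Set.mem_diff, hA]
    constructor
    · intro h
      have hvI : v ∈ I := by
        rcases (by rw [huniv]; trivial : v ∈ K ∪ I) with hh | hh
        · exact absurd (hKdeg v hh) (by omega)
        · exact hh
      exact ⟨hvI, by omega⟩
    · rintro ⟨hvI, hvA⟩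
      have := hIdeg v hvI
      omega
  have hKsplit : (K ∩ A).ncard + (K \ A).ncard = 2*k+1 := by
    rw [Set.ncard_inter_add_ncard_diff_eq_ncard K A (Set.toFinite _), hKc]
  have hIsplit : (I ∩ A).ncard + (I \ A).ncard = 2*k := by
    rw [Set.ncard_inter_add_ncard_diff_eq_ncard I A (Set.toFinite _), hIc]
  have hcnt := count_eq k G σ
  rw [hBig, hSmall] at hcnt
  -- (K ∩ A).ncard = (I ∩ A).ncard + 1
  have hIA : (I ∩ A).ncard = 0 := by
    by_contra h
    have h2 : 2 ≤ (K ∩ A).ncard := by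
      have hKsplit' := hKsplit
      rw [← hcnt] at hKsplit'
      omega
    obtain ⟨u, huIA⟩ := Set.nonempty_of_ncard_ne_zero h
    obtain ⟨v1, hv1, v2, hv2, hne⟩ := (Set.one_lt_ncard (Set.toFinite _)).mp (show 1 < (K ∩ A).ncard by omega)
    have hnb : ∀ v ∈ K ∩ A, G.neighborSet v = K \ {v} := by
      intro v hv
      have hsub : K \ {v} ⊆ G.neighborSet v := by
        rintro w hw
        rw [Set.mem_diff, Set.mem_singleton_iff] at hw
        exact hclique hv.1 hw.1 (fun h => hw.2 h.symm)
      refine (Set.eq_of_subset_of_ncard_le hsub ?_ (Set.toFinite _)).symm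
      rw [Set.ncard_diff_singleton_of_mem hv.1, hKc]
      have hdv : deg G v = 2*k := hv.2
      rw [deg] at hdv; omega
    have hsub2 : G.neighborSet u ⊆ K \ {v1, v2} := by
      intro w hw
      have hwK : w ∈ K := hInb u huIA.1 hw
      refine ⟨hwK, ?_⟩
      rintro (rfl | rfl)
      · have : u ∈ G.neighborSet w := hw.symm
        rw [hnb w hv1] at this
        exact Set.disjoint_left.mp hdisj this.1 huIA.1
      · have : u ∈ G.neighborSet w := hw.symm
        rw [hnb w hv2] at this
        exact Set.disjoint_left.mp hdisj this.1 huIA.1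
    have h3 := Set.ncard_le_ncard hsub2 (Set.toFinite _)
    rw [Set.ncard_diff (by rintro x (rfl | rfl); exacts [hv1.1, hv2.1]) (Set.toFinite _),
      Set.ncard_pair hne, hKc] at h3
    have hdu : deg G u = 2*k := huIA.2
    rw [deg] at hdu
    omega
  have hKA : (K ∩ A).ncard = 1 := by
    have hKsplit' := hKsplit
    rw [← hcnt] at hKsplit'
    omega
  obtain ⟨v, hvKA⟩ := Set.ncard_eq_one.mp hKA
  have hvmem : v ∈ K ∩ A := by rw [hvKA]; rfl
  refine ⟨v, hvmem.2, fun w hw => ?_⟩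
  have hwK : w ∈ K := by
    rcases (by rw [huniv]; trivial : w ∈ K ∪ I) with hh | hh
    · exact hh
    · exfalso
      have : w ∈ I ∩ A := ⟨hh, hw⟩
      have he : I ∩ A = ∅ := (Set.ncard_eq_zero (Set.toFinite _)).mp hIA
      rw [he] at this; exact this
  have : w ∈ K ∩ A := ⟨hwK, hw⟩
  rw [hvKA] at this
  exact this

theorem main_thm (k : ℕ) (G : SimpleGraph (Fin (4 * k + 1)))
    (hsplit : IsSplit G) (hsc : IsSelfCompl G) :
    (∃! v, deg G v = 2 * k) ∧
    ∀ v, deg G v = 2 * k → IsSelfCompl (G.induce {u | u ≠ v}) := by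
  obtain ⟨σ⟩ := hsc
  obtain ⟨K, I, hp⟩ := hsplit
  have hcardsum : K.ncard + I.ncard = 4*k+1 := by
    rw [← Set.ncard_union_eq hp.1 (Set.toFinite _) (Set.toFinite _), hp.2.1, Set.ncard_univ]
    simp
  -- K.ncard ≤ 2k+1
  have hub : K.ncard ≤ 2*k+1 := by
    have h1 := indep_bound hp (image_indep_of_isClique σ hp.2.2.1)
    rw [Set.ncard_image_of_injective _ σ.injective] at h1
    omega
  have hlb : 2*k ≤ K.ncard := by
    have hIindep : ∀ u ∈ I, ∀ w ∈ I, u ≠ w → ¬ G.Adj u w := fun u hu w hw _ => hp.2.2.2 u hu w hw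
    have h1 := clique_bound hp (image_isClique_of_indep σ hIindep)
    rw [Set.ncard_image_of_injective _ σ.injective] at h1
    omega
  have huniq : ∃! v, deg G v = 2*k := by
    rcases Nat.lt_or_ge K.ncard (2*k+1) with hc | hc
    · -- K.ncard = 2k : upgrade the partition
      have hKc : K.ncard = 2*k := by omega
      have hIc : I.ncard = 2*k+1 := by omega
      obtain ⟨hdisj, huniv, hclique, hindep⟩ := hp
      have hInb : ∀ u ∈ I, G.neighborSet u ⊆ K := by
        intro u hu w hw
        rcases (by rw [huniv]; trivial : w ∈ K ∪ I) with h | h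
        · exact h
        · exact absurd hw (hindep u hu w h)
      -- find u ∈ I with deg u = 2k
      have hex : ∃ u ∈ I, deg G u = 2*k := by
        by_contra hno
        push_neg at hno
        have hIsmall : I ⊆ {v | deg G v < 2*k} := by
          intro u hu
          have h1 : deg G u ≤ 2*k := by
            rw [deg, ← hKc]; exact Set.ncard_le_ncard (hInb u hu) (Set.toFinite _)
          have h2 := hno u hu
          simp only [Set.mem_setOf_eq]
          omega
        have hBigK : {v | 2*k < deg G v} ⊆ K := by
          intro v hv
          simp only [Set.mem_setOf_eq] at hv
          rcases (by rw [huniv]; trivial : v ∈ K ∪ I) with h | h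
          · exact h
          · exfalso
            have h1 : deg G v ≤ 2*k := by
              rw [deg, ← hKc]; exact Set.ncard_le_ncard (hInb v h) (Set.toFinite _)
            omega
        have c1 := Set.ncard_le_ncard hIsmall (Set.toFinite _)
        have c2 := Set.ncard_le_ncard hBigK (Set.toFinite _)
        have c3 := count_eq k G σ
        omega
      obtain ⟨u, hu, hdu⟩ := hex
      have heq : G.neighborSet u = K :=
        Set.eq_of_subset_of_ncard_le (hInb u hu) (by rw [deg] at hdu; omega) (Set.toFinite _)
      have hu_notin : u ∉ K := fun hk => Set.disjoint_left.mp hdisj hk hu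
      have hp' : IsSplitPartition G (insert u K) (I \ {u}) := by
        refine ⟨?_, ?_, ?_, ?_⟩
        · rw [Set.disjoint_left]
          rintro x (rfl | hxK)
          · rintro ⟨_, hx2⟩; exact hx2 rfl
          · rintro ⟨hxI, _⟩; exact Set.disjoint_left.mp hdisj hxK hxI
        · apply Set.eq_univ_of_univ_subset
          intro x _
          rcases (by rw [huniv]; trivial : x ∈ K ∪ I) with h | h
          · exact Or.inl (Set.mem_insert_of_mem _ h)
          · by_cases hx : x = u
            · exact Or.inl (hx ▸ Set.mem_insert _ _)
            · exact Or.inr ⟨h, hx⟩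
        · rw [SimpleGraph.isClique_insert]
          refine ⟨hclique, fun b hb _ => ?_⟩
          rw [← SimpleGraph.mem_neighborSet, heq]
          exact hb
        · intro a ha b hb
          exact hindep a ha.1 b hb.1
      have hKc' : (insert u K).ncard = 2*k+1 := by
        rw [Set.ncard_insert_of_notMem hu_notin (Set.toFinite _)]; omega
      exact key k G σ hp' hKc'
    · exact key k G σ hp (by omega)
  refine ⟨huniq, fun v hv => ?_⟩
  -- σ fixes v
  have hσv : σ v = v := by
    have h1 : deg Gᶜ (σ v) = deg G v := deg_iso σ v
    have h2 := deg_compl_add G (σ v)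
    simp only [Fintype.card_fin] at h2
    have h3 : deg G (σ v) = 2*k := by omega
    obtain ⟨w, hw, hwu⟩ := huniq
    rw [hwu _ h3, hwu _ hv]
  -- build the isomorphism on the induced graph
  have hmem : ∀ a : Fin (4*k+1), (a = v) ↔ (σ a = v) := by
    intro a
    constructor
    · rintro rfl; exact hσv
    · intro h; exact σ.injective (by rw [h, hσv])
  refine ⟨⟨σ.toEquiv.subtypeEquiv (fun a => not_congr (hmem a)), ?_⟩⟩
  rintro ⟨a, ha⟩ ⟨b, hb⟩
  simp only [Equiv.subtypeEquiv_apply, comap_adj, Function.Embedding.coe_subtype, compl_adj,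
    ne_eq, Subtype.mk.injEq]
  constructor
  · rintro ⟨hne, hnadj⟩
    have : Gᶜ.Adj (σ a) (σ b) := by rw [compl_adj]; exact ⟨hne, hnadj⟩
    exact σ.map_rel_iff.mp this
  · intro hadj
    have : Gᶜ.Adj (σ a) (σ b) := σ.map_rel_iff.mpr hadj
    rw [compl_adj] at this
    exact this


/-- Let `G` be a split graph on `4k + 1` vertices.  If `G` is
self-complementary, then `G` has exactly one vertex `v` of degree `2k`, and the
induced subgraph `G - v` is also self-complementary. -/
theorem split_selfCompl_odd_order (k : ℕ) (G : SimpleGraph (Fin (4 * k + 1)))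
    (hsplit : IsSplit G) (hsc : IsSelfCompl G) :
    (∃! v, deg G v = 2 * k) ∧
    ∀ v, deg G v = 2 * k → IsSelfCompl (G.induce {u | u ≠ v}) := by
  exact main_thm k G hsplit hsc
end

section
/- Let G be a self-complementary pseudo-split graph with a pseudo-split partition K disjoint-union I disjoint-union C. If C is nonempty, then the induced subgraph G - C is a self-complementary split graph of even order. -/
open SimpleGraph

/-- A pseudo-split partition: a partition of the vertex set into a clique `K`, an
independent set `I`, and a (possibly empty) set `C` that induces a 5-cycle, is
complete to `K`, and is nonadjacent to `I`. -/
def IsPseudoSplitPartition {V : Type*} (G : SimpleGraph V) (K I C : Set V) : Prop :=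
  Disjoint K I ∧ Disjoint K C ∧ Disjoint I C ∧ K ∪ I ∪ C = Set.univ ∧
  G.IsClique K ∧ (∀ u ∈ I, ∀ v ∈ I, ¬ G.Adj u v) ∧
  (C = ∅ ∨ (Nonempty (G.induce C ≃g SimpleGraph.cycleGraph 5) ∧
    (∀ u ∈ C, ∀ v ∈ K, G.Adj u v) ∧ (∀ u ∈ C, ∀ v ∈ I, ¬ G.Adj u v)))

/-- A pseudo-split graph: a graph admitting a pseudo-split partition. -/
def IsPseudoSplit {V : Type*} (G : SimpleGraph V) : Prop :=
  ∃ K I C, IsPseudoSplitPartition G K I C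

/-! ### Auxiliary facts about the 5-cycle -/

lemma c5_no_triangle : ∀ a b c : Fin 5, (cycleGraph 5).Adj a b → (cycleGraph 5).Adj a c →
    (cycleGraph 5).Adj b c → False := by decide

lemma c5_no_indep3 : ∀ a b c : Fin 5, a ≠ b → a ≠ c → b ≠ c → ¬(cycleGraph 5).Adj a b →
    ¬(cycleGraph 5).Adj a c → ¬(cycleGraph 5).Adj b c → False := by decide

lemma c5_no_3nbrs : ∀ u a b c : Fin 5, a ≠ b → a ≠ c → b ≠ c → (cycleGraph 5).Adj u a →
    (cycleGraph 5).Adj u b → (cycleGraph 5).Adj u c → False := by decide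

lemma c5_no_3nonnbrs : ∀ u a b c : Fin 5, a ≠ b → a ≠ c → b ≠ c → a ≠ u → b ≠ u → c ≠ u →
    ¬(cycleGraph 5).Adj u a → ¬(cycleGraph 5).Adj u b → ¬(cycleGraph 5).Adj u c → False := by
  decide

lemma induce_compl_eq' {V : Type*} (G : SimpleGraph V) (s : Set V) :
    (Gᶜ).induce s = (G.induce s)ᶜ := by
  ext a b
  simp only [comap_adj, Function.Embedding.coe_subtype, compl_adj]
  exact and_congr_left' (not_congr Subtype.ext_iff).symm

/-- Induced subgraph isomorphism along a graph isomorphism. -/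
def isoInduce {V W : Type*} {A : SimpleGraph V} {B : SimpleGraph W} (e : A ≃g B) (s : Set W) :
    A.induce (⇑e ⁻¹' s) ≃g B.induce s where
  toEquiv := (e.toEquiv.subtypeEquiv fun _ => Iff.rfl)
  map_rel_iff' := e.map_rel_iff

/-- Complement isomorphism. -/
def isoCompl {V W : Type*} {A : SimpleGraph V} {B : SimpleGraph W} (e : A ≃g B) : Aᶜ ≃g Bᶜ where
  toEquiv := e.toEquiv
  map_rel_iff' := by
    intro a b
    simp [compl_adj, e.map_rel_iff, e.toEquiv.injective.ne_iff]

lemma c5c_aux : ∀ a b : Fin 5,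
    (cycleGraph 5).Adj ((![0,2,4,1,3] : Fin 5 → Fin 5) a) (![0,2,4,1,3] b) ↔
      ((cycleGraph 5)ᶜ).Adj a b := by decide

/-- The complement of the 5-cycle is again a 5-cycle. -/
def c5c : (cycleGraph 5)ᶜ ≃g cycleGraph 5 where
  toEquiv := ⟨![0,2,4,1,3], ![0,3,1,4,2], by decide, by decide⟩
  map_rel_iff' := c5c_aux _ _

/-- Equal graphs are isomorphic. -/
def eqToIso {V : Type*} {A B : SimpleGraph V} (h : A = B) : A ≃g B := h ▸ (Iso.refl : A ≃g A)

section Csubset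
variable {V : Type*} [Finite V] {G : SimpleGraph V}

omit [Finite V] in
lemma adj_transfer {C : Set V} (e : G.induce C ≃g cycleGraph 5) {a b : V} (ha : a ∈ C)
    (hb : b ∈ C) : G.Adj a b ↔ (cycleGraph 5).Adj (e ⟨a, ha⟩) (e ⟨b, hb⟩) :=
  (e.map_rel_iff (a := ⟨a, ha⟩) (b := ⟨b, hb⟩)).symm

omit [Finite V] in
lemma ne_transfer {C : Set V} (e : G.induce C ≃g cycleGraph 5) {a b : V} (ha : a ∈ C)
    (hb : b ∈ C) (hab : a ≠ b) : e ⟨a, ha⟩ ≠ e ⟨b, hb⟩ := by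
  intro h
  exact hab (congrArg Subtype.val (e.toEquiv.injective h))

omit [Finite V] in
lemma card_of_c5 {C : Set V} (e : G.induce C ≃g cycleGraph 5) : C.ncard = 5 := by
  rw [← Nat.card_coe_set_eq, Nat.card_congr e.toEquiv, Nat.card_eq_fintype_card,
    Fintype.card_fin]

lemma ncard_le_two_of_no_three {S : Set V}
    (h : ∀ a ∈ S, ∀ b ∈ S, ∀ c ∈ S, a ≠ b → a ≠ c → b ≠ c → False) : S.ncard ≤ 2 := by
  by_contra hlt
  obtain ⟨a, ha, b, hb, c, hc, hab, hac, hbc⟩ := (Set.two_lt_ncard S.toFinite).mp (by omega)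
  exact h a ha b hb c hc hab hac hbc

/-- The 5-cycle part of a pseudo-split partition is unique (subset form). -/
lemma C_subset (K1 I1 C1 K2 I2 C2 : Set V)
    (h1 : IsPseudoSplitPartition G K1 I1 C1) (h2 : IsPseudoSplitPartition G K2 I2 C2)
    (hne1 : C1.Nonempty) (hne2 : C2.Nonempty) : C1 ⊆ C2 := by
  obtain ⟨hKI1, hKC1, hIC1, huniv1, hclK1, hindI1, hC1⟩ := h1
  obtain ⟨hKI2, hKC2, hIC2, huniv2, hclK2, hindI2, hC2⟩ := h2
  rcases hC1 with h | ⟨⟨e1⟩, hcomp1, hanti1⟩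
  · exact absurd h hne1.ne_empty
  rcases hC2 with h | ⟨⟨e2⟩, hcomp2, hanti2⟩
  · exact absurd h hne2.ne_empty
  intro u hu
  by_contra hu2
  have humem : u ∈ K2 ∪ I2 := by
    have : u ∈ K2 ∪ I2 ∪ C2 := huniv2 ▸ Set.mem_univ u
    rcases this with h | h
    · exact h
    · exact absurd h hu2
  have hcard5 : C2.ncard = 5 := card_of_c5 e2
  rcases humem with huK | huI
  · -- u ∈ K2 : every vertex of C2 is adjacent to u
    have hsub : C2 ⊆ (C2 ∩ K1) ∪ (C2 ∩ C1 ∩ {v | G.Adj u v}) := by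
      intro v hv
      have hadj : G.Adj u v := (hcomp2 v hv u huK).symm
      have : v ∈ K1 ∪ I1 ∪ C1 := huniv1 ▸ Set.mem_univ v
      rcases this with (h | h) | h
      · exact Or.inl ⟨hv, h⟩
      · exact absurd hadj (hanti1 u hu v h)
      · exact Or.inr ⟨⟨hv, h⟩, hadj⟩
    have hA : (C2 ∩ K1).ncard ≤ 2 := by
      refine ncard_le_two_of_no_three fun a ha b hb c hc hab hac hbc => ?_
      exact c5_no_triangle (e2 ⟨a, ha.1⟩) (e2 ⟨b, hb.1⟩) (e2 ⟨c, hc.1⟩)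
        ((adj_transfer e2 ha.1 hb.1).mp (hclK1 ha.2 hb.2 hab))
        ((adj_transfer e2 ha.1 hc.1).mp (hclK1 ha.2 hc.2 hac))
        ((adj_transfer e2 hb.1 hc.1).mp (hclK1 hb.2 hc.2 hbc))
    have hB : (C2 ∩ C1 ∩ {v | G.Adj u v}).ncard ≤ 2 := by
      refine ncard_le_two_of_no_three fun a ha b hb c hc hab hac hbc => ?_
      exact c5_no_3nbrs (e1 ⟨u, hu⟩) (e1 ⟨a, ha.1.2⟩) (e1 ⟨b, hb.1.2⟩) (e1 ⟨c, hc.1.2⟩)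
        (ne_transfer e1 ha.1.2 hb.1.2 hab) (ne_transfer e1 ha.1.2 hc.1.2 hac)
        (ne_transfer e1 hb.1.2 hc.1.2 hbc)
        ((adj_transfer e1 hu ha.1.2).mp ha.2) ((adj_transfer e1 hu hb.1.2).mp hb.2)
        ((adj_transfer e1 hu hc.1.2).mp hc.2)
    have := Set.ncard_le_ncard hsub (Set.toFinite _)
    have := Set.ncard_union_le (C2 ∩ K1) (C2 ∩ C1 ∩ {v | G.Adj u v})
    omega
  · -- u ∈ I2 : every vertex of C2 is nonadjacent to u
    have hsub : C2 ⊆ (C2 ∩ I1) ∪ (C2 ∩ C1 ∩ {v | ¬ G.Adj u v ∧ v ≠ u}) := by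
      intro v hv
      have hnadj : ¬ G.Adj u v := fun h => hanti2 v hv u huI h.symm
      have hvu : v ≠ u := fun h => (Set.disjoint_right.mp hIC2 hv) (h ▸ huI)
      have : v ∈ K1 ∪ I1 ∪ C1 := huniv1 ▸ Set.mem_univ v
      rcases this with (h | h) | h
      · exact absurd (hcomp1 u hu v h) hnadj
      · exact Or.inl ⟨hv, h⟩
      · exact Or.inr ⟨⟨hv, h⟩, hnadj, hvu⟩
    have hA : (C2 ∩ I1).ncard ≤ 2 := by
      refine ncard_le_two_of_no_three fun a ha b hb c hc hab hac hbc => ?_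
      exact c5_no_indep3 (e2 ⟨a, ha.1⟩) (e2 ⟨b, hb.1⟩) (e2 ⟨c, hc.1⟩)
        (ne_transfer e2 ha.1 hb.1 hab) (ne_transfer e2 ha.1 hc.1 hac)
        (ne_transfer e2 hb.1 hc.1 hbc)
        (fun h => hindI1 a ha.2 b hb.2 ((adj_transfer e2 ha.1 hb.1).mpr h))
        (fun h => hindI1 a ha.2 c hc.2 ((adj_transfer e2 ha.1 hc.1).mpr h))
        (fun h => hindI1 b hb.2 c hc.2 ((adj_transfer e2 hb.1 hc.1).mpr h))
    have hB : (C2 ∩ C1 ∩ {v | ¬ G.Adj u v ∧ v ≠ u}).ncard ≤ 2 := by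
      refine ncard_le_two_of_no_three fun a ha b hb c hc hab hac hbc => ?_
      exact c5_no_3nonnbrs (e1 ⟨u, hu⟩) (e1 ⟨a, ha.1.2⟩) (e1 ⟨b, hb.1.2⟩) (e1 ⟨c, hc.1.2⟩)
        (ne_transfer e1 ha.1.2 hb.1.2 hab) (ne_transfer e1 ha.1.2 hc.1.2 hac)
        (ne_transfer e1 hb.1.2 hc.1.2 hbc)
        (ne_transfer e1 ha.1.2 hu ha.2.2) (ne_transfer e1 hb.1.2 hu hb.2.2)
        (ne_transfer e1 hc.1.2 hu hc.2.2)
        (fun h => ha.2.1 ((adj_transfer e1 hu ha.1.2).mpr h))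
        (fun h => hb.2.1 ((adj_transfer e1 hu hb.1.2).mpr h))
        (fun h => hc.2.1 ((adj_transfer e1 hu hc.1.2).mpr h))
    have := Set.ncard_le_ncard hsub (Set.toFinite _)
    have := Set.ncard_union_le (C2 ∩ I1) (C2 ∩ C1 ∩ {v | ¬ G.Adj u v ∧ v ≠ u})
    omega
end Csubset

/-- A self-complementary graph on `n` vertices satisfies `4 ∣ n (n-1)`. -/
lemma sc_four_dvd {W : Type*} [Finite W] (H : SimpleGraph W) (hsc : IsSelfCompl H) :
    ∃ a, Nat.card W * (Nat.card W - 1) = 4 * a := by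
  classical
  letI := Fintype.ofFinite W
  obtain ⟨e⟩ := hsc
  have h1 : H.edgeFinset.card = Hᶜ.edgeFinset.card := e.card_edgeFinset_eq
  have h4 : H.edgeFinset ∪ Hᶜ.edgeFinset = (⊤ : SimpleGraph W).edgeFinset := by
    have hes : (H.edgeSet ∪ Hᶜ.edgeSet) = (⊤ : SimpleGraph W).edgeSet := by
      rw [← edgeSet_sup, sup_compl_eq_top]
    rw [edgeFinset, edgeFinset, edgeFinset, ← Set.toFinset_union]
    exact Set.toFinset_congr hes
  have hdisj : Disjoint H.edgeFinset Hᶜ.edgeFinset := by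
    rw [edgeFinset, edgeFinset, Set.disjoint_toFinset]
    exact disjoint_edgeSet.mpr disjoint_compl_right
  have h5 : H.edgeFinset.card + Hᶜ.edgeFinset.card = (Fintype.card W).choose 2 := by
    rw [← Finset.card_union_of_disjoint hdisj, h4, card_edgeFinset_top_eq_card_choose_two]
  set n := Fintype.card W with hn
  have hdvd : 2 ∣ n * (n - 1) := by
    rcases n with _ | k
    · simp
    · have : (k + 1) * k = k * (k + 1) := by ring
      simpa [this] using (Nat.even_mul_succ_self k).two_dvd
  have h6 : n * (n - 1) = 2 * (n.choose 2) := by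
    rw [Nat.choose_two_right, Nat.mul_div_cancel' hdvd]
  refine ⟨H.edgeFinset.card, ?_⟩
  rw [Nat.card_eq_fintype_card, ← hn, h6, ← h5, ← h1]
  ring

/-- Let `G` be a self-complementary pseudo-split graph with a
pseudo-split partition `K ⊎ I ⊎ C`.  If `C` is nonempty, then the induced subgraph
`G - C` is a self-complementary split graph of even order. -/
theorem pseudoSplit_remove_C5 {V : Type*} [Finite V] (G : SimpleGraph V)
    (K I C : Set V) (hpart : IsPseudoSplitPartition G K I C)
    (hsc : IsSelfCompl G) (hC : C.Nonempty) :
    IsSelfCompl (G.induce (K ∪ I)) ∧ IsSplit (G.induce (K ∪ I)) ∧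
    Even (Nat.card ↥(K ∪ I)) := by
  classical
  obtain ⟨φ⟩ := hsc
  obtain ⟨hKI, hKC, hIC, huniv, hclK, hindI, hC5or⟩ := hpart
  rcases hC5or with h | ⟨⟨e⟩, hcomp, hanti⟩
  · exact absurd h hC.ne_empty
  have hpartG : IsPseudoSplitPartition G K I C :=
    ⟨hKI, hKC, hIC, huniv, hclK, hindI, Or.inr ⟨⟨e⟩, hcomp, hanti⟩⟩
  -- the partition pulled back through φ
  have hpart' : IsPseudoSplitPartition G (⇑φ ⁻¹' I) (⇑φ ⁻¹' K) (⇑φ ⁻¹' C) := by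
    refine ⟨(hKI.symm).preimage _, hIC.preimage _, hKC.preimage _, ?_, ?_, ?_, ?_⟩
    · rw [← Set.preimage_union, ← Set.preimage_union, show I ∪ K ∪ C = K ∪ I ∪ C by
        rw [Set.union_comm I K], huniv, Set.preimage_univ]
    · intro x hx y hy hxy
      exact φ.map_rel_iff.mp ⟨fun h => hxy (φ.toEquiv.injective h), hindI _ hx _ hy⟩
    · intro x hx y hy hadj
      have h2 := φ.map_rel_iff.mpr hadj
      exact h2.2 (hclK hx hy h2.1)
    · refine Or.inr ⟨⟨?_⟩, ?_, ?_⟩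
      · exact (isoInduce φ C).trans ((eqToIso (induce_compl_eq' G C)).trans
          ((isoCompl e).trans c5c))
      · intro x hx y hy
        refine φ.map_rel_iff.mp ⟨?_, hanti _ hx _ hy⟩
        intro h
        exact Set.disjoint_right.mp hIC hx (h ▸ hy)
      · intro x hx y hy hadj
        exact (φ.map_rel_iff.mpr hadj).2 (hcomp _ hx _ hy)
  have hC' : (⇑φ ⁻¹' C).Nonempty := hC.preimage φ.toEquiv.surjective
  have hCeq : C = ⇑φ ⁻¹' C :=
    subset_antisymm (C_subset K I C _ _ _ hpartG hpart' hC hC')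
      (C_subset _ _ _ K I C hpart' hpartG hC' hC)
  have hsKI : K ∪ I = Cᶜ := by
    ext x
    simp only [Set.mem_compl_iff]
    constructor
    · rintro (h | h) hxC
      · exact Set.disjoint_left.mp hKC h hxC
      · exact Set.disjoint_left.mp hIC h hxC
    · intro h
      have hx : x ∈ K ∪ I ∪ C := huniv ▸ Set.mem_univ x
      rcases hx with h' | h'
      · exact h'
      · exact absurd h' h
  have hspre : ⇑φ ⁻¹' (K ∪ I) = K ∪ I := by
    rw [hsKI, Set.preimage_compl, ← hCeq]
  have iso : G.induce (K ∪ I) ≃g (G.induce (K ∪ I))ᶜ := by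
    have h0 := isoInduce φ (K ∪ I)
    rw [hspre] at h0
    exact h0.trans (eqToIso (induce_compl_eq' G (K ∪ I)))
  refine ⟨⟨iso⟩, ?_, ?_⟩
  · -- split
    refine ⟨Subtype.val ⁻¹' K, Subtype.val ⁻¹' I, hKI.preimage _, ?_, ?_, ?_⟩
    · apply Set.eq_univ_of_forall
      intro x
      rcases x.2 with h | h
      · exact Or.inl h
      · exact Or.inr h
    · intro x hx y hy hxy
      exact hclK hx hy (fun h => hxy (Subtype.ext h))
    · intro x hx y hy hadj
      exact hindI _ hx _ hy hadj
  · -- even order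
    obtain ⟨m, hm⟩ : ∃ m, Nat.card ↥(K ∪ I) = m := ⟨_, rfl⟩
    rw [hm]
    have h5' : C.ncard = 5 := card_of_c5 e
    have hcompl := Set.ncard_add_ncard_compl C
    have hmc : m = Cᶜ.ncard := by
      rw [← hm, Nat.card_coe_set_eq, hsKI]
    have hsum : m + 5 = Nat.card V := by omega
    obtain ⟨a, ha⟩ := sc_four_dvd G ⟨φ⟩
    obtain ⟨b, hb⟩ := sc_four_dvd (G.induce (K ∪ I)) ⟨iso⟩
    rw [hm] at hb
    rw [← hsum] at ha
    have ha' : (m + 5) * (m + 4) = 4 * a := by simpa using ha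
    have key : (m + 5) * (m + 4) = m * (m - 1) + 10 * m + 20 := by
      rcases m with _ | k
      · norm_num
      · simp only [Nat.add_sub_cancel]
        ring
    rw [ha', hb] at key
    exact Nat.even_iff.mpr (by omega)
end

section
/- Every self-complementary split graph whose clique part and independent part each contain at least two vertices admits a diamond partition. Moreover, if a self-complementary split graph G has order 4k with k >= 1, then G admits a diamond partition {V1, V2, V3, V4} that is self-complementary, i.e., there is an antimorphism sigma of G with sigma(V1) = V2, sigma(V2) = V3, sigma(V3) = V4, and sigma(V4) = V1. -/
open SimpleGraph

/-- A diamond partition: a partition of the vertex set into four nonempty parts such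
that `V1` is complete to `V3` and `V2` is nonadjacent to `V4`. -/
def IsDiamondPartition {V : Type*} (G : SimpleGraph V) (V1 V2 V3 V4 : Set V) : Prop :=
  V1.Nonempty ∧ V2.Nonempty ∧ V3.Nonempty ∧ V4.Nonempty ∧
  Disjoint V1 V2 ∧ Disjoint V1 V3 ∧ Disjoint V1 V4 ∧
  Disjoint V2 V3 ∧ Disjoint V2 V4 ∧ Disjoint V3 V4 ∧
  V1 ∪ V2 ∪ V3 ∪ V4 = Set.univ ∧
  (∀ u ∈ V1, ∀ v ∈ V3, G.Adj u v) ∧ (∀ u ∈ V2, ∀ v ∈ V4, ¬ G.Adj u v)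


set_option maxHeartbeats 1000000
set_option linter.unusedSectionVars false

namespace SCSAux

variable {V : Type} [Finite V] {G : SimpleGraph V}

lemma flip_one (σ : G ≃g Gᶜ) {a b : V} (h : a ≠ b) :
    G.Adj (σ a) (σ b) ↔ ¬ G.Adj a b := by
  have h2 : Gᶜ.Adj (σ a) (σ b) ↔ G.Adj a b := σ.map_adj_iff
  have h3 : Gᶜ.Adj (σ a) (σ b) ↔ (σ a ≠ σ b ∧ ¬ G.Adj (σ a) (σ b)) := compl_adj G _ _
  have h4 : σ a ≠ σ b := fun he => h (σ.toEquiv.injective he)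
  tauto

lemma flip_iter (σ : G ≃g Gᶜ) (n : ℕ) {a b : V} (h : a ≠ b) :
    G.Adj ((σ.toEquiv ^ n) a) ((σ.toEquiv ^ n) b) ↔ (Even n ↔ G.Adj a b) := by
  induction n with
  | zero => simp
  | succ n ih =>
    have hne : (σ.toEquiv ^ n) a ≠ (σ.toEquiv ^ n) b :=
      fun he => h ((σ.toEquiv ^ n).injective he)
    have hs : ∀ x : V, (σ.toEquiv ^ (n+1)) x = σ ((σ.toEquiv ^ n) x) := by
      intro x; rw [pow_succ']; rfl
    rw [hs, hs, flip_one σ hne, ih, Nat.even_add_one]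
    tauto

lemma indep_ncard_le {K I : Set V} (hsp : IsSplitPartition G K I) {S : Set V}
    (hS : ∀ u ∈ S, ∀ v ∈ S, u ≠ v → ¬ G.Adj u v) : S.ncard ≤ I.ncard + 1 := by
  obtain ⟨hdis, huniv, hcl, hind⟩ := hsp
  have hsub : (S ∩ K).Subsingleton := by
    intro x hx y hy
    by_contra hne
    exact hS x hx.1 y hy.1 hne (hcl hx.2 hy.2 hne)
  have h1 : (S ∩ K).ncard ≤ 1 := by
    rcases Set.Subsingleton.eq_empty_or_singleton hsub with h | ⟨a, ha⟩
    · simp [h]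
    · simp [ha]
  have hSeq : S = (S ∩ I) ∪ (S ∩ K) := by
    ext x
    constructor
    · intro hx
      have : x ∈ K ∪ I := huniv ▸ Set.mem_univ x
      rcases this with h | h
      · exact Or.inr ⟨hx, h⟩
      · exact Or.inl ⟨hx, h⟩
    · rintro (⟨h, -⟩ | ⟨h, -⟩) <;> exact h
  have h2 := Set.ncard_union_le (S ∩ I) (S ∩ K)
  rw [← hSeq] at h2
  have h3 := Set.ncard_le_ncard (Set.inter_subset_right : S ∩ I ⊆ I) (Set.toFinite I)
  omega

lemma clique_ncard_le {K I : Set V} (hsp : IsSplitPartition G K I) {S : Set V}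
    (hS : G.IsClique S) : S.ncard ≤ K.ncard + 1 := by
  obtain ⟨hdis, huniv, hcl, hind⟩ := hsp
  have hsub : (S ∩ I).Subsingleton := by
    intro x hx y hy
    by_contra hne
    exact hind x hx.2 y hy.2 (hS hx.1 hy.1 hne)
  have h1 : (S ∩ I).ncard ≤ 1 := by
    rcases Set.Subsingleton.eq_empty_or_singleton hsub with h | ⟨a, ha⟩
    · simp [h]
    · simp [ha]
  have hSeq : S = (S ∩ K) ∪ (S ∩ I) := by
    ext x
    constructor
    · intro hx
      have : x ∈ K ∪ I := huniv ▸ Set.mem_univ x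
      rcases this with h | h
      · exact Or.inl ⟨hx, h⟩
      · exact Or.inr ⟨hx, h⟩
    · rintro (⟨h, -⟩ | ⟨h, -⟩) <;> exact h
  have h2 := Set.ncard_union_le (S ∩ K) (S ∩ I)
  rw [← hSeq] at h2
  have h3 := Set.ncard_le_ncard (Set.inter_subset_right : S ∩ K ⊆ K) (Set.toFinite K)
  omega

lemma image_clique_indep (σ : G ≃g Gᶜ) {S : Set V} (hS : G.IsClique S) :
    ∀ u ∈ ⇑σ '' S, ∀ v ∈ ⇑σ '' S, u ≠ v → ¬ G.Adj u v := by
  rintro u ⟨a, haS, rfl⟩ v ⟨b, hbS, rfl⟩ hne hadj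
  have hab : a ≠ b := fun he => hne (by rw [he])
  exact (flip_one σ hab).mp hadj (hS haS hbS hab)

lemma image_indep_clique (σ : G ≃g Gᶜ) {S : Set V}
    (hS : ∀ u ∈ S, ∀ v ∈ S, ¬ G.Adj u v) : G.IsClique (⇑σ '' S) := by
  rintro u ⟨a, haS, rfl⟩ v ⟨b, hbS, rfl⟩ hne
  have hab : a ≠ b := fun he => hne (by rw [he])
  exact (flip_one σ hab).mpr (hS a haS b hbS)

lemma sp_ncard_le (σ : G ≃g Gᶜ) {A B : Set V} (h : IsSplitPartition G A B) :
    A.ncard ≤ B.ncard + 1 ∧ B.ncard ≤ A.ncard + 1 := by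
  have hinj : Function.Injective ⇑σ := σ.toEquiv.injective
  constructor
  · have h1 := indep_ncard_le h (image_clique_indep σ h.2.2.1)
    rwa [Set.ncard_image_of_injective _ hinj] at h1
  · have h1 := clique_ncard_le h (image_indep_clique σ h.2.2.2)
    rwa [Set.ncard_image_of_injective _ hinj] at h1

lemma sp_ncard_eq (σ : G ≃g Gᶜ) {A B : Set V} (h : IsSplitPartition G A B) {k : ℕ}
    (hcard : Nat.card V = 4 * k) : A.ncard = 2 * k ∧ B.ncard = 2 * k := by
  have hsum : A.ncard + B.ncard = 4 * k := by
    rw [← Set.ncard_union_eq h.1 (Set.toFinite A) (Set.toFinite B), h.2.1,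
      Set.ncard_univ, hcard]
  have := sp_ncard_le σ h
  omega

lemma sigma_image_K (σ : G ≃g Gᶜ) {K I : Set V} (hsp : IsSplitPartition G K I)
    {k : ℕ} (hk : 1 ≤ k) (hcard : Nat.card V = 4 * k) :
    ⇑σ '' K = I := by
  obtain ⟨hKI, hUI, hKcl, hIind⟩ := hsp
  have hsp' : IsSplitPartition G K I := ⟨hKI, hUI, hKcl, hIind⟩
  have hinj : Function.Injective ⇑σ := σ.toEquiv.injective
  have hKc : K.ncard = 2 * k := (sp_ncard_eq σ hsp' hcard).1
  have hIc : I.ncard = 2 * k := (sp_ncard_eq σ hsp' hcard).2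
  have himgcard : (⇑σ '' K).ncard = 2 * k := by
    rw [Set.ncard_image_of_injective _ hinj, hKc]
  have hne_KI : ∀ {x y : V}, x ∈ K → y ∈ I → x ≠ y := by
    intro x y hx hy he
    exact Set.disjoint_left.mp hKI hx (he ▸ hy)
  have hKorI : ∀ x : V, x ∈ K ∨ x ∈ I := by
    intro x
    have : x ∈ K ∪ I := hUI ▸ Set.mem_univ x
    exact this
  have hindep := image_clique_indep σ hKcl
  have hsub : ⇑σ '' K ⊆ I := by
    by_contra hns
    obtain ⟨a, haK', haI⟩ := Set.not_subset.mp hns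
    have haK : a ∈ K := (hKorI a).resolve_right haI
    obtain ⟨u, huK, hua⟩ := (haK' : a ∈ ⇑σ '' K)
    have haK' : a ∈ ⇑σ '' K := ⟨u, huK, hua⟩
    -- σ '' K ∩ K is a subsingleton
    have hss : (⇑σ '' K ∩ K).Subsingleton := by
      intro x hx y hy
      by_contra hne
      exact hindep x hx.1 y hy.1 hne (hKcl hx.2 hy.2 hne)
    have hsing : ⇑σ '' K ∩ K = {a} :=
      Set.eq_singleton_iff_unique_mem.mpr ⟨⟨haK', haK⟩, fun b hb => hss hb ⟨haK', haK⟩⟩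
    have hsplit : ⇑σ '' K = (⇑σ '' K ∩ K) ∪ (⇑σ '' K ∩ I) := by
      ext x
      constructor
      · intro hx
        rcases hKorI x with h | h
        · exact Or.inl ⟨hx, h⟩
        · exact Or.inr ⟨hx, h⟩
      · rintro (⟨h, -⟩ | ⟨h, -⟩) <;> exact h
    have hdisj2 : Disjoint (⇑σ '' K ∩ K) (⇑σ '' K ∩ I) := by
      apply Set.disjoint_left.mpr
      intro x hx hy
      exact hne_KI hx.2 hy.2 rfl
    have hcnt : (⇑σ '' K ∩ I).ncard = 2 * k - 1 := by
      have := Set.ncard_union_eq hdisj2 (Set.toFinite _) (Set.toFinite _)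
      rw [← hsplit, himgcard, hsing, Set.ncard_singleton] at this
      omega
    have hlt : (⇑σ '' K ∩ I).ncard < I.ncard := by rw [hcnt, hIc]; omega
    obtain ⟨b, hbI, hbn⟩ := Set.exists_mem_notMem_of_ncard_lt_ncard hlt (Set.toFinite _)
    have hbK' : b ∉ ⇑σ '' K := fun h => hbn ⟨h, hbI⟩
    set w := σ.toEquiv.symm b with hwdef
    have hw : σ w = b := σ.toEquiv.apply_symm_apply b
    have hwK : w ∉ K := fun h => hbK' ⟨w, h, hw⟩
    have hwI : w ∈ I := (hKorI w).resolve_left hwK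
    -- I \ σ '' K = {b}
    have hIdiff : I \ ⇑σ '' K = {b} := by
      have hd2 : Disjoint (I ∩ ⇑σ '' K) (I \ ⇑σ '' K) :=
        Set.disjoint_left.mpr (fun x hx hy => hy.2 hx.2)
      have hu2 : I = (I ∩ ⇑σ '' K) ∪ (I \ ⇑σ '' K) := by
        ext x
        constructor
        · intro hx
          by_cases h : x ∈ ⇑σ '' K
          · exact Or.inl ⟨hx, h⟩
          · exact Or.inr ⟨hx, h⟩
        · rintro (⟨h, -⟩ | ⟨h, -⟩) <;> exact h
      have hc2 : (I ∩ ⇑σ '' K).ncard = 2 * k - 1 := by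
        rw [Set.inter_comm]; exact hcnt
      have := Set.ncard_union_eq hd2 (Set.toFinite _) (Set.toFinite _)
      rw [← hu2, hIc, hc2] at this
      have hone : (I \ ⇑σ '' K).ncard = 1 := by omega
      obtain ⟨c, hc⟩ := Set.ncard_eq_one.mp hone
      have : b ∈ ({c} : Set V) := hc ▸ ⟨hbI, hbK'⟩
      rw [hc, this]
    -- w is adjacent to every vertex of K other than u
    have c1 : ∀ x ∈ K, x ≠ u → G.Adj w x := by
      intro x hxK hxu
      have hσx : σ x ∈ ⇑σ '' K := ⟨x, hxK, rfl⟩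
      have hσxI : σ x ∈ I := by
        rcases hKorI (σ x) with h | h
        · exfalso
          have : σ x = a := hss ⟨hσx, h⟩ ⟨haK', haK⟩
          exact hxu (hinj (by rw [this, ← hua]))
        · exact h
      have hwx : w ≠ x := fun he => hne_KI hxK hwI he.symm
      have hnadj : ¬ G.Adj (σ w) (σ x) := by
        rw [hw]; exact hIind b hbI (σ x) hσxI
      by_contra hno
      exact hnadj ((flip_one σ hwx).mpr hno)
    -- u is nonadjacent to every vertex of I other than w
    have c2 : ∀ y ∈ I, y ≠ w → ¬ G.Adj u y := by
      intro y hyI hyw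
      have hσyK' : σ y ∉ ⇑σ '' K := by
        rintro ⟨x, hxK, hxy⟩
        exact hne_KI hxK hyI (hinj hxy)
      have hσyK : σ y ∈ K := by
        rcases hKorI (σ y) with h | h
        · exact h
        · exfalso
          have : σ y ∈ I \ ⇑σ '' K := ⟨h, hσyK'⟩
          rw [hIdiff] at this
          have hyb : σ y = b := this
          exact hyw (hinj (by rw [hyb, hw]))
      have hσya : a ≠ σ y := fun he => hσyK' (he ▸ haK')
      have hadj : G.Adj a (σ y) := hKcl haK hσyK hσya
      have huy : u ≠ y := hne_KI huK hyI
      exact (flip_one σ huy).mp (by rw [hua]; exact hadj)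
    -- derive a contradiction with the counting lemma, in both cases
    by_cases hadj : G.Adj u w
    · -- (K ∪ {w}, I \ {w}) is a split partition with parts of sizes 2k+1, 2k-1
      have hsp2 : IsSplitPartition G (K ∪ {w}) (I \ {w}) := by
        refine ⟨?_, ?_, ?_, ?_⟩
        · apply Set.disjoint_left.mpr
          rintro x (hx | hx) hy
          · exact hne_KI hx hy.1 rfl
          · exact hy.2 hx
        · ext x
          simp only [Set.mem_union, Set.mem_diff, Set.mem_singleton_iff, Set.mem_univ,
            iff_true]
          rcases hKorI x with h | h
          · exact Or.inl (Or.inl h)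
          · by_cases hxw : x = w
            · exact Or.inl (Or.inr hxw)
            · exact Or.inr ⟨h, hxw⟩
        · rintro x (hx | hx) y (hy | hy) hne
          · exact hKcl hx hy hne
          · rw [hy]
            by_cases hxu : x = u
            · rw [hxu]; exact hadj
            · exact (c1 x hx hxu).symm
          · rw [hx]
            by_cases hyu : y = u
            · rw [hyu]; exact hadj.symm
            · exact c1 y hy hyu
          · exact absurd (hx.trans hy.symm) hne
        · intro x hx y hy
          exact hIind x hx.1 y hy.1
      have h1 : (K ∪ {w}).ncard = 2 * k + 1 := by
        rw [Set.union_singleton, Set.ncard_insert_of_notMem hwK (Set.toFinite K), hKc]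
      have h2 : (I \ {w}).ncard = 2 * k - 1 := by
        rw [Set.ncard_diff_singleton_of_mem hwI, hIc]
      have := (sp_ncard_le σ hsp2).1
      rw [h1, h2] at this
      omega
    · -- (K \ {u}, I ∪ {u}) is a split partition with parts of sizes 2k-1, 2k+1
      have hsp3 : IsSplitPartition G (K \ {u}) (I ∪ {u}) := by
        refine ⟨?_, ?_, ?_, ?_⟩
        · apply Set.disjoint_left.mpr
          rintro x hx (hy | hy)
          · exact hne_KI hx.1 hy rfl
          · exact hx.2 hy
        · ext x
          simp only [Set.mem_union, Set.mem_diff, Set.mem_singleton_iff, Set.mem_univ,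
            iff_true]
          rcases hKorI x with h | h
          · by_cases hxu : x = u
            · exact Or.inr (Or.inr hxu)
            · exact Or.inl ⟨h, hxu⟩
          · exact Or.inr (Or.inl h)
        · exact hKcl.subset Set.diff_subset
        · rintro x (hx | hx) y (hy | hy)
          · exact hIind x hx y hy
          · rw [hy]
            intro hc
            by_cases hxw : x = w
            · rw [hxw] at hc; exact hadj hc.symm
            · exact c2 x hx hxw hc.symm
          · rw [hx]
            intro hc
            by_cases hyw : y = w
            · rw [hyw] at hc; exact hadj hc
            · exact c2 y hy hyw hc
          · rw [hx, hy]; exact G.irrefl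
      have h1 : (K \ {u}).ncard = 2 * k - 1 := by
        rw [Set.ncard_diff_singleton_of_mem huK, hKc]
      have h2 : (I ∪ {u}).ncard = 2 * k + 1 := by
        have huI : u ∉ I := fun h => hne_KI huK h rfl
        rw [Set.union_singleton, Set.ncard_insert_of_notMem huI (Set.toFinite I), hIc]
      have := (sp_ncard_le σ hsp3).2
      rw [h1, h2] at this
      omega
  exact Set.eq_of_subset_of_ncard_le hsub (by rw [himgcard, hIc]) (Set.toFinite I)


lemma sigma_image_I (σ : G ≃g Gᶜ) {K I : Set V} (hsp : IsSplitPartition G K I)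
    (hK : ⇑σ '' K = I) : ⇑σ '' I = K := by
  have hinj : Function.Injective ⇑σ := σ.toEquiv.injective
  have hKorI : ∀ x : V, x ∈ K ∨ x ∈ I := by
    intro x
    have : x ∈ K ∪ I := hsp.2.1 ▸ Set.mem_univ x
    exact this
  have hne_KI : ∀ {x y : V}, x ∈ K → y ∈ I → x ≠ y := by
    intro x y hx hy he
    exact Set.disjoint_left.mp hsp.1 hx (he ▸ hy)
  have huniv : ⇑σ '' (K ∪ I) = Set.univ := by
    rw [hsp.2.1, Set.image_univ]
    exact σ.toEquiv.range_eq_univ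
  rw [Set.image_union, hK] at huniv
  ext x
  constructor
  · rintro ⟨y, hyI, rfl⟩
    rcases hKorI (σ y) with h | h
    · exact h
    · exfalso
      rw [← hK] at h
      obtain ⟨z, hzK, hz⟩ := h
      exact hne_KI hzK hyI (hinj hz)
  · intro hxK
    have : x ∈ I ∪ ⇑σ '' I := huniv ▸ Set.mem_univ x
    rcases this with h | h
    · exact absurd rfl (hne_KI hxK h)
    · exact h

lemma alt_pow (σ : G ≃g Gᶜ) {K I : Set V}
    (hsK : ∀ x ∈ K, σ x ∈ I) (hsI : ∀ x ∈ I, σ x ∈ K) (n : ℕ) (x : V) :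
    (x ∈ K → (Even n → (σ.toEquiv ^ n) x ∈ K) ∧ (¬ Even n → (σ.toEquiv ^ n) x ∈ I))
    ∧ (x ∈ I → (Even n → (σ.toEquiv ^ n) x ∈ I) ∧ (¬ Even n → (σ.toEquiv ^ n) x ∈ K)) := by
  induction n with
  | zero => exact ⟨fun h => ⟨fun _ => h, fun h2 => absurd (Even.zero) h2⟩,
      fun h => ⟨fun _ => h, fun h2 => absurd (Even.zero) h2⟩⟩
  | succ n ih =>
    have hs : (σ.toEquiv ^ (n+1)) x = σ ((σ.toEquiv ^ n) x) := by
      rw [pow_succ']; rfl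
    obtain ⟨h1, h2⟩ := ih
    rw [hs]
    constructor
    · intro hxK
      obtain ⟨ha, hb⟩ := h1 hxK
      constructor
      · intro hev
        have : ¬ Even n := by rw [Nat.even_add_one] at hev; exact hev
        exact hsI _ (hb this)
      · intro hodd
        have : Even n := by rw [Nat.even_add_one] at hodd; tauto
        exact hsK _ (ha this)
    · intro hxI
      obtain ⟨ha, hb⟩ := h2 hxI
      constructor
      · intro hev
        have : ¬ Even n := by rw [Nat.even_add_one] at hev; exact hev
        exact hsK _ (hb this)
      · intro hodd
        have : Even n := by rw [Nat.even_add_one] at hodd; tauto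
        exact hsI _ (ha this)

lemma even_minimalPeriod (σ : G ≃g Gᶜ) {K I : Set V} (hsp : IsSplitPartition G K I)
    (hsK : ∀ x ∈ K, σ x ∈ I) (hsI : ∀ x ∈ I, σ x ∈ K) (x : V) :
    Even (Function.minimalPeriod ⇑(σ.toEquiv * σ.toEquiv) x) := by
  by_contra hodd
  set τ : Equiv.Perm V := σ.toEquiv * σ.toEquiv with hτ
  set p := Function.minimalPeriod ⇑τ x with hp
  have hper : (⇑τ)^[p] x = x := Function.iterate_minimalPeriod
  have hpow : (⇑τ)^[p] x = (σ.toEquiv ^ (2 * p)) x := by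
    rw [Equiv.Perm.iterate_eq_pow, hτ, ← sq, ← pow_mul]
  have hyx : (σ.toEquiv ^ p) ((σ.toEquiv ^ p) x) = x := by
    rw [← Equiv.Perm.mul_apply, ← pow_add]
    have : p + p = 2 * p := by omega
    rw [this, ← hpow, hper]
  set y := (σ.toEquiv ^ p) x with hy
  have hKorI : ∀ z : V, z ∈ K ∨ z ∈ I := by
    intro z
    have : z ∈ K ∪ I := hsp.2.1 ▸ Set.mem_univ z
    exact this
  have hne_KI : ∀ {a b : V}, a ∈ K → b ∈ I → a ≠ b := by
    intro a b ha hb he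
    exact Set.disjoint_left.mp hsp.1 ha (he ▸ hb)
  have hxy : x ≠ y := by
    rcases hKorI x with h | h
    · exact hne_KI h (((alt_pow σ hsK hsI p x).1 h).2 hodd)
    · exact fun he => hne_KI (((alt_pow σ hsK hsI p x).2 h).2 hodd) h he.symm
  have hflip := flip_iter σ p hxy
  rw [← hy, hyx] at hflip
  have hsymm : G.Adj y x ↔ G.Adj x y := ⟨Adj.symm, Adj.symm⟩
  tauto

lemma coloring (τ : Equiv.Perm V) (K : Set V) (hK : ∀ x ∈ K, τ x ∈ K)
    (hev : ∀ x, Even (Function.minimalPeriod ⇑τ x)) :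
    ∃ S, S ⊆ K ∧ ∀ x ∈ K, (x ∈ S ↔ τ x ∉ S) := by
  classical
  set o := orderOf τ with ho'
  have ho : 0 < o := orderOf_pos τ
  have hper : ∀ x : V, Function.IsPeriodicPt ⇑τ o x := by
    intro x
    show (⇑τ)^[o] x = x
    rw [Equiv.Perm.iterate_eq_pow, pow_orderOf_eq_one]
    rfl
  have hR : ∀ x y : V, (∃ n, (τ ^ n) x = y) → (∃ n, (τ ^ n) y = x) := by
    rintro x y ⟨n, hn⟩
    refine ⟨n * (o - 1), ?_⟩
    calc (τ ^ (n * (o - 1))) y = (τ ^ (n * (o - 1))) ((τ ^ n) x) := by rw [hn]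
      _ = (τ ^ (n * (o - 1) + n)) x := by rw [pow_add, Equiv.Perm.mul_apply]
      _ = ((τ ^ o) ^ n) x := by
          rw [← pow_mul]
          congr 1
          obtain ⟨m, hm⟩ : ∃ m, o = m + 1 := ⟨o - 1, by omega⟩
          rw [hm, Nat.add_sub_cancel]
          ring_nf
      _ = x := by rw [pow_orderOf_eq_one, one_pow]; rfl
  let s : Setoid V := ⟨fun x y => ∃ n, (τ ^ n) x = y,
    ⟨fun x => ⟨0, rfl⟩, fun h => hR _ _ h,
     fun ⟨m, hm⟩ ⟨n, hn⟩ => ⟨n + m, by rw [pow_add, Equiv.Perm.mul_apply, hm, hn]⟩⟩⟩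
  let rep : V → V := fun x => (Quotient.mk s x).out
  have hrep : ∀ x, ∃ n, (τ ^ n) (rep x) = x := by
    intro x
    exact Quotient.exact (Quotient.out_eq (Quotient.mk s x))
  have hrepτ : ∀ x, rep (τ x) = rep x := by
    intro x
    have h1 : Quotient.mk s (τ x) = Quotient.mk s x :=
      Quotient.sound (hR x (τ x) ⟨1, by rw [pow_one]⟩)
    show (Quotient.mk s (τ x)).out = (Quotient.mk s x).out
    rw [h1]
  let d : V → ℕ := fun x => Nat.find (hrep x)
  have hd : ∀ x, (τ ^ (d x)) (rep x) = x := fun x => Nat.find_spec (hrep x)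
  have key : ∀ x, (Even (d (τ x)) ↔ ¬ Even (d x)) := by
    intro x
    have h1 : (τ ^ (d (τ x))) (rep x) = τ x := by
      have := hd (τ x)
      rwa [hrepτ x] at this
    have h2 : (τ ^ (d x + 1)) (rep x) = τ x := by
      rw [pow_succ', Equiv.Perm.mul_apply, hd x]
    have hppos : 0 < Function.minimalPeriod ⇑τ (rep x) :=
      (hper (rep x)).minimalPeriod_pos ho
    have hpev : Even (Function.minimalPeriod ⇑τ (rep x)) := hev _
    have hcancel : ∀ a b : ℕ, a ≤ b → (τ ^ a) (rep x) = (τ ^ b) (rep x) →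
        (2 : ℕ) ∣ (b - a) := by
      intro a b hab he
      have h3 : (τ ^ a) ((τ ^ (b - a)) (rep x)) = (τ ^ a) (rep x) := by
        rw [← Equiv.Perm.mul_apply, ← pow_add]
        have : a + (b - a) = b := by omega
        rw [this, ← he]
      have h4 : (τ ^ (b - a)) (rep x) = rep x := (τ ^ a).injective h3
      have h5 : Function.IsPeriodicPt ⇑τ (b - a) (rep x) := by
        show (⇑τ)^[b - a] (rep x) = rep x
        rw [Equiv.Perm.iterate_eq_pow]
        exact h4
      exact (even_iff_two_dvd.mp hpev).trans h5.minimalPeriod_dvd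
    rcases le_total (d (τ x)) (d x + 1) with h | h
    · obtain ⟨c, hc⟩ := hcancel _ _ h (h1.trans h2.symm)
      rw [Nat.even_iff, Nat.even_iff]
      omega
    · obtain ⟨c, hc⟩ := hcancel _ _ h (h2.trans h1.symm)
      rw [Nat.even_iff, Nat.even_iff]
      omega
  refine ⟨{x | x ∈ K ∧ Even (d x)}, fun x hx => hx.1, ?_⟩
  intro x hxK
  have hk := key x
  have hτK : τ x ∈ K := hK x hxK
  simp only [Set.mem_setOf_eq]
  tauto

end SCSAux


/-- Every self-complementary split graph whose clique part and
independent part each contain at least two vertices admits a diamond partition.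
Moreover, every self-complementary split graph of order `4k` (`k ≥ 1`) admits a diamond
partition `{V1, V2, V3, V4}` that is self-complementary, i.e., some antimorphism `σ` of
`G` satisfies `σ(V1) = V2`, `σ(V2) = V3`, `σ(V3) = V4`, and `σ(V4) = V1`. -/
theorem scs_diamond_partition :
    (∀ (V : Type) [Finite V] (G : SimpleGraph V) (K I : Set V),
      IsSplitPartition G K I → IsSelfCompl G → 2 ≤ K.ncard → 2 ≤ I.ncard →
      ∃ V1 V2 V3 V4, IsDiamondPartition G V1 V2 V3 V4) ∧
    (∀ k : ℕ, 1 ≤ k → ∀ G : SimpleGraph (Fin (4 * k)), IsSplit G → IsSelfCompl G →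
      ∃ V1 V2 V3 V4, IsDiamondPartition G V1 V2 V3 V4 ∧
        ∃ σ : G ≃g Gᶜ, ⇑σ '' V1 = V2 ∧ ⇑σ '' V2 = V3 ∧ ⇑σ '' V3 = V4 ∧ ⇑σ '' V4 = V1) := by
  constructor
  · -- Part 1
    intro V _ G K I hsp hsc hK2 hI2
    obtain ⟨hKI, hUI, hKcl, hIind⟩ := hsp
    have hne_KI : ∀ {x y : V}, x ∈ K → y ∈ I → x ≠ y := fun hx hy he =>
      Set.disjoint_left.mp hKI hx (he ▸ hy)
    obtain ⟨a, haK, b, hbK, hab⟩ := (Set.one_lt_ncard (Set.toFinite K)).mp (by omega)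
    obtain ⟨c, hcI, e, heI, hce⟩ := (Set.one_lt_ncard (Set.toFinite I)).mp (by omega)
    refine ⟨{a}, {c}, K \ {a}, I \ {c}, ⟨a, rfl⟩, ⟨c, rfl⟩,
      ⟨b, hbK, fun h => hab (Eq.symm h)⟩, ⟨e, heI, fun h => hce (Eq.symm h)⟩,
      ?_, ?_, ?_, ?_, ?_, ?_, ?_, ?_, ?_⟩
    · exact Set.disjoint_left.mpr (fun x hx hy =>
        hne_KI (show x ∈ K from hx ▸ haK) (hy ▸ hcI) rfl)
    · exact Set.disjoint_left.mpr (fun x hx hy => hy.2 hx)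
    · exact Set.disjoint_left.mpr (fun x hx hy =>
        hne_KI (show x ∈ K from hx ▸ haK) hy.1 rfl)
    · exact Set.disjoint_left.mpr (fun x hx hy =>
        hne_KI hy.1 (show x ∈ I from hx ▸ hcI) rfl)
    · exact Set.disjoint_left.mpr (fun x hx hy => hy.2 hx)
    · exact Set.disjoint_left.mpr (fun x hx hy => hne_KI hx.1 hy.1 rfl)
    · ext x
      simp only [Set.mem_union, Set.mem_diff, Set.mem_singleton_iff, Set.mem_univ, iff_true]
      have : x ∈ K ∪ I := hUI ▸ Set.mem_univ x
      rcases this with h | h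
      · by_cases hxa : x = a
        · exact Or.inl (Or.inl (Or.inl hxa))
        · exact Or.inl (Or.inr ⟨h, hxa⟩)
      · by_cases hxc : x = c
        · exact Or.inl (Or.inl (Or.inr hxc))
        · exact Or.inr ⟨h, hxc⟩
    · rintro u hu v hv
      have hu' : u = a := hu
      rw [hu']
      exact hKcl haK hv.1 (fun h => hv.2 (Eq.symm h))
    · rintro u hu v hv
      have hu' : u = c := hu
      rw [hu']
      exact hIind c hcI v hv.1
  · -- Part 2
    intro k hk G hsplit hsc
    obtain ⟨K, I, hsp⟩ := hsplit
    obtain ⟨σ⟩ := hsc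
    have hcard : Nat.card (Fin (4 * k)) = 4 * k := by simp
    obtain ⟨hKI, hUI, hKcl, hIind⟩ := hsp
    have hsp' : IsSplitPartition G K I := ⟨hKI, hUI, hKcl, hIind⟩
    have hinj : Function.Injective ⇑σ := σ.toEquiv.injective
    have himK : ⇑σ '' K = I := SCSAux.sigma_image_K σ hsp' hk hcard
    have himI : ⇑σ '' I = K := SCSAux.sigma_image_I σ hsp' himK
    have hsK : ∀ x ∈ K, σ x ∈ I := by
      intro x hx; rw [← himK]; exact ⟨x, hx, rfl⟩
    have hsI : ∀ x ∈ I, σ x ∈ K := by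
      intro x hx; rw [← himI]; exact ⟨x, hx, rfl⟩
    set τ : Equiv.Perm (Fin (4 * k)) := σ.toEquiv * σ.toEquiv with hτ
    have hτapp : ∀ x, τ x = σ (σ x) := fun x => rfl
    have hτK : ∀ x ∈ K, τ x ∈ K := fun x hx => hsI _ (hsK _ hx)
    have hev : ∀ x, Even (Function.minimalPeriod ⇑τ x) :=
      SCSAux.even_minimalPeriod σ hsp' hsK hsI
    obtain ⟨S, hSK, hSalt⟩ := SCSAux.coloring τ K hτK hev
    have hτsurj : ∀ y ∈ K, ∃ x ∈ K, τ x = y := by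
      intro y hy
      rw [← himI] at hy
      obtain ⟨z, hzI, hzy⟩ := hy
      rw [← himK] at hzI
      obtain ⟨x, hxK, hxz⟩ := hzI
      exact ⟨x, hxK, by rw [hτapp, hxz, hzy]⟩
    have hτS : ⇑τ '' S = K \ S := by
      ext y; constructor
      · rintro ⟨x, hxS, rfl⟩
        exact ⟨hτK x (hSK hxS), (hSalt x (hSK hxS)).mp hxS⟩
      · rintro ⟨hyK, hyS⟩
        obtain ⟨x, hxK, rfl⟩ := hτsurj y hyK
        exact ⟨x, (hSalt x hxK).mpr hyS, rfl⟩
    have hτKS : ⇑τ '' (K \ S) = S := by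
      ext y; constructor
      · rintro ⟨x, ⟨hxK, hxS⟩, rfl⟩
        by_contra hn
        exact hxS ((hSalt x hxK).mpr hn)
      · intro hyS
        obtain ⟨x, hxK, rfl⟩ := hτsurj y (hSK hyS)
        exact ⟨x, ⟨hxK, fun hxS => ((hSalt x hxK).mp hxS) hyS⟩, rfl⟩
    have hKcard : K.ncard = 2 * k := (SCSAux.sp_ncard_eq σ hsp' hcard).1
    have hKne : K.Nonempty := Set.nonempty_of_ncard_ne_zero (by omega)
    obtain ⟨x0, hx0⟩ := hKne
    have hSne : S.Nonempty ∧ (K \ S).Nonempty := by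
      by_cases h : x0 ∈ S
      · exact ⟨⟨x0, h⟩, ⟨τ x0, hτS ▸ ⟨x0, h, rfl⟩⟩⟩
      · have hx0' : x0 ∈ K \ S := ⟨hx0, h⟩
        exact ⟨⟨τ x0, hτKS ▸ ⟨x0, hx0', rfl⟩⟩, ⟨x0, hx0'⟩⟩
    have himgSS : ⇑σ '' (⇑σ '' S) = ⇑τ '' S := by
      rw [Set.image_image]; rfl
    have himgKS : ⇑σ '' (⇑σ '' (K \ S)) = ⇑τ '' (K \ S) := by
      rw [Set.image_image]; rfl
    have hne_KI : ∀ {x y : Fin (4 * k)}, x ∈ K → y ∈ I → x ≠ y := fun hx hy he =>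
      Set.disjoint_left.mp hKI hx (he ▸ hy)
    have hV2I : ⇑σ '' S ⊆ I := by
      rintro y ⟨x, hx, rfl⟩; exact hsK x (hSK hx)
    have hV4I : ⇑σ '' (K \ S) ⊆ I := by
      rintro y ⟨x, hx, rfl⟩; exact hsK x hx.1
    refine ⟨S, ⇑σ '' S, K \ S, ⇑σ '' (K \ S),
      ⟨hSne.1, hSne.1.image _, hSne.2, hSne.2.image _, ?_, ?_, ?_, ?_, ?_, ?_, ?_, ?_, ?_⟩,
      σ, rfl, ?_, rfl, ?_⟩
    · exact Set.disjoint_left.mpr (fun x hx hy => hne_KI (hSK hx) (hV2I hy) rfl)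
    · exact Set.disjoint_left.mpr (fun x hx hy => hy.2 hx)
    · exact Set.disjoint_left.mpr (fun x hx hy => hne_KI (hSK hx) (hV4I hy) rfl)
    · exact Set.disjoint_left.mpr (fun x hx hy => hne_KI hy.1 (hV2I hx) rfl)
    · apply Set.disjoint_left.mpr
      rintro y ⟨x, hxS, rfl⟩ ⟨x', hx', hx'e⟩
      exact hx'.2 (hinj hx'e ▸ hxS)
    · exact Set.disjoint_left.mpr (fun x hx hy => hne_KI hx.1 (hV4I hy) rfl)
    · ext x
      simp only [Set.mem_union, Set.mem_univ, iff_true]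
      have hx : x ∈ K ∪ I := hUI ▸ Set.mem_univ x
      rcases hx with h | h
      · by_cases hxS : x ∈ S
        · exact Or.inl (Or.inl (Or.inl hxS))
        · exact Or.inl (Or.inr ⟨h, hxS⟩)
      · rw [← himK] at h
        obtain ⟨z, hzK, rfl⟩ := h
        by_cases hzS : z ∈ S
        · exact Or.inl (Or.inl (Or.inr ⟨z, hzS, rfl⟩))
        · exact Or.inr ⟨z, ⟨hzK, hzS⟩, rfl⟩
    · intro u hu v hv
      exact hKcl (hSK hu) hv.1 (fun he => hv.2 (he ▸ hu))
    · intro u hu v hv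
      exact hIind u (hV2I hu) v (hV4I hv)
    · rw [himgSS, hτS]
    · rw [himgKS, hτKS]
end

section
/- A self-complementary split graph admits a rectangle partition if and only if it is isomorphic to Z_k for some k >= 1. -/
open SimpleGraph

/-- A rectangle partition: a partition of the vertex set into four nonempty parts such
that `V1` is complete to `V2` and nonadjacent to `V3`, while `V4` is complete to `V3`
and nonadjacent to `V2`. -/
def IsRectanglePartition {V : Type*} (G : SimpleGraph V) (V1 V2 V3 V4 : Set V) : Prop :=
  V1.Nonempty ∧ V2.Nonempty ∧ V3.Nonempty ∧ V4.Nonempty ∧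
  Disjoint V1 V2 ∧ Disjoint V1 V3 ∧ Disjoint V1 V4 ∧
  Disjoint V2 V3 ∧ Disjoint V2 V4 ∧ Disjoint V3 V4 ∧
  V1 ∪ V2 ∪ V3 ∪ V4 = Set.univ ∧
  (∀ u ∈ V1, ∀ v ∈ V2, G.Adj u v) ∧ (∀ u ∈ V1, ∀ v ∈ V3, ¬ G.Adj u v) ∧
  (∀ u ∈ V4, ∀ v ∈ V3, G.Adj u v) ∧ (∀ u ∈ V4, ∀ v ∈ V2, ¬ G.Adj u v)

/-- The graph `Z_k`, obtained from the path `P4` (with vertices `0 - 1 - 2 - 3`) by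
substituting each degree-one vertex (`0` and `3`) with an independent set of `k`
vertices and each degree-two vertex (`1` and `2`) with a clique of `k` vertices. -/
def Zgraph (k : ℕ) : SimpleGraph (Fin 4 × Fin k) :=
  SimpleGraph.fromRel fun u v =>
    (u.1 = v.1 ∧ (u.1.val = 1 ∨ u.1.val = 2)) ∨
    u.1.val + 1 = v.1.val ∨ v.1.val + 1 = u.1.val

theorem scs_arith (a b c d : ℕ) (ha : 1 ≤ a) (hb : 1 ≤ b) (hc : 1 ≤ c) (hd : 1 ≤ d)
    (H : ∀ s t : ℕ, s + t = a+b+c+d-1 →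
      ((if b = s then a else 0)+(if a+b+c-1 = s then b else 0)+(if b+c+d-1 = s then c else 0)+(if c = s then d else 0)) =
      ((if b = t then a else 0)+(if a+b+c-1 = t then b else 0)+(if b+c+d-1 = t then c else 0)+(if c = t then d else 0))) :
    a = b ∧ b = c ∧ c = d := by
  have E3 := H (a+b+c-1) d (by omega)
  have E4 := H (b+c+d-1) a (by omega)
  clear H
  rw [if_neg (by omega : ¬ b = a+b+c-1), if_pos (rfl : a+b+c-1 = a+b+c-1),
      if_neg (by omega : ¬ c = a+b+c-1), if_neg (by omega : ¬ b+c+d-1 = d)] at E3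
  rw [if_neg (by omega : ¬ b = b+c+d-1), if_pos (rfl : b+c+d-1 = b+c+d-1),
      if_neg (by omega : ¬ c = b+c+d-1), if_neg (by omega : ¬ a+b+c-1 = a)] at E4
  simp only [show (b+c+d-1 = a+b+c-1) ↔ (a = d) by omega] at E3
  simp only [show (a+b+c-1 = b+c+d-1) ↔ (a = d) by omega] at E4
  split_ifs at E3 E4 <;> omega


/-- Blowup-of-P4 structure: `A - B - C - D` with `B, C` cliques and `A, D` independent. -/
def IsBlowup {V : Type*} (G : SimpleGraph V) (A B C D : Set V) : Prop :=
  A.Nonempty ∧ B.Nonempty ∧ C.Nonempty ∧ D.Nonempty ∧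
  Disjoint A B ∧ Disjoint A C ∧ Disjoint A D ∧
  Disjoint B C ∧ Disjoint B D ∧ Disjoint C D ∧
  A ∪ B ∪ C ∪ D = Set.univ ∧
  ∀ u v, G.Adj u v ↔ u ≠ v ∧
    ((u ∈ B ∧ v ∈ B) ∨ (u ∈ C ∧ v ∈ C) ∨ (u ∈ A ∧ v ∈ B) ∨ (u ∈ B ∧ v ∈ A) ∨
     (u ∈ B ∧ v ∈ C) ∨ (u ∈ C ∧ v ∈ B) ∨ (u ∈ C ∧ v ∈ D) ∨ (u ∈ D ∧ v ∈ C))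

lemma mk_blowup {V : Type*} (G : SimpleGraph V) (A B C D : Set V)
    (hA : A.Nonempty) (hB : B.Nonempty) (hC : C.Nonempty) (hD : D.Nonempty)
    (dAB : Disjoint A B) (dAC : Disjoint A C) (dAD : Disjoint A D)
    (dBC : Disjoint B C) (dBD : Disjoint B D) (dCD : Disjoint C D)
    (huniv : A ∪ B ∪ C ∪ D = Set.univ)
    (hclique : G.IsClique (B ∪ C))
    (hindep : ∀ u ∈ A ∪ D, ∀ v ∈ A ∪ D, ¬ G.Adj u v)
    (hAB : ∀ u ∈ A, ∀ v ∈ B, G.Adj u v)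
    (hAC : ∀ u ∈ A, ∀ v ∈ C, ¬ G.Adj u v)
    (hDC : ∀ u ∈ D, ∀ v ∈ C, G.Adj u v)
    (hDB : ∀ u ∈ D, ∀ v ∈ B, ¬ G.Adj u v) :
    IsBlowup G A B C D := by
  refine ⟨hA, hB, hC, hD, dAB, dAC, dAD, dBC, dBD, dCD, huniv, fun u v => ?_⟩
  constructor
  · intro hadj
    refine ⟨hadj.ne, ?_⟩
    have hu : u ∈ A ∪ B ∪ C ∪ D := huniv ▸ Set.mem_univ u
    have hv : v ∈ A ∪ B ∪ C ∪ D := huniv ▸ Set.mem_univ v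
    simp only [Set.mem_union] at hu hv
    rcases hu with ((hu | hu) | hu) | hu <;> rcases hv with ((hv | hv) | hv) | hv
    · exact absurd hadj (hindep u (Or.inl hu) v (Or.inl hv))
    · exact Or.inr (Or.inr (Or.inl ⟨hu, hv⟩))
    · exact absurd hadj (hAC u hu v hv)
    · exact absurd hadj (hindep u (Or.inl hu) v (Or.inr hv))
    · exact Or.inr (Or.inr (Or.inr (Or.inl ⟨hu, hv⟩)))
    · exact Or.inl ⟨hu, hv⟩
    · exact Or.inr (Or.inr (Or.inr (Or.inr (Or.inl ⟨hu, hv⟩))))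
    · exact absurd hadj.symm (hDB v hv u hu)
    · exact absurd hadj.symm (hAC v hv u hu)
    · exact Or.inr (Or.inr (Or.inr (Or.inr (Or.inr (Or.inl ⟨hu, hv⟩)))))
    · exact Or.inr (Or.inl ⟨hu, hv⟩)
    · exact Or.inr (Or.inr (Or.inr (Or.inr (Or.inr (Or.inr (Or.inl ⟨hu, hv⟩))))))
    · exact absurd hadj (hindep u (Or.inr hu) v (Or.inl hv))
    · exact absurd hadj (hDB u hu v hv)
    · exact Or.inr (Or.inr (Or.inr (Or.inr (Or.inr (Or.inr (Or.inr ⟨hu, hv⟩))))))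
    · exact absurd hadj (hindep u (Or.inr hu) v (Or.inr hv))
  · rintro ⟨hne, h⟩
    rcases h with ⟨hu, hv⟩ | ⟨hu, hv⟩ | ⟨hu, hv⟩ | ⟨hu, hv⟩ | ⟨hu, hv⟩ | ⟨hu, hv⟩ | ⟨hu, hv⟩ | ⟨hu, hv⟩
    · exact hclique (Or.inl hu) (Or.inl hv) hne
    · exact hclique (Or.inr hu) (Or.inr hv) hne
    · exact hAB u hu v hv
    · exact (hAB v hv u hu).symm
    · exact hclique (Or.inl hu) (Or.inr hv) hne
    · exact hclique (Or.inr hu) (Or.inl hv) hne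
    · exact (hDC v hv u hu).symm
    · exact hDC u hu v hv

lemma exists_blowup {V : Type*} (G : SimpleGraph V) (hsplit : IsSplit G)
    {V1 V2 V3 V4 : Set V} (hrect : IsRectanglePartition G V1 V2 V3 V4) :
    ∃ A B C D, IsBlowup G A B C D := by
  obtain ⟨K, I, dKI, hKIuniv, hK, hI⟩ := hsplit
  obtain ⟨h1, h2, h3, h4, d12, d13, d14, d23, d24, d34, huniv, a12, n13, a43, n42⟩ := hrect
  have hKorI : ∀ v : V, v ∈ K ∨ v ∈ I := by
    intro v
    have := hKIuniv ▸ Set.mem_univ v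
    simpa using this
  by_cases hc : (V1 ∩ K).Nonempty
  · -- V1, V4 ⊆ K; V2, V3 ⊆ I; blowup with A = V2, B = V1, C = V4, D = V3
    obtain ⟨u1, hu1, hu1K⟩ := hc
    have hV3I : V3 ⊆ I := by
      intro v hv
      rcases hKorI v with hvK | hvI
      · exact absurd (hK hu1K hvK (fun h => d13.le_bot ⟨hu1, h ▸ hv⟩)) (n13 u1 hu1 v hv)
      · exact hvI
    obtain ⟨w3, hw3⟩ := id h3
    have hV4K : V4 ⊆ K := by
      intro v hv
      rcases hKorI v with hvK | hvI
      · exact hvK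
      · exact absurd (a43 v hv w3 hw3) (hI v hvI w3 (hV3I hw3))
    obtain ⟨u4, hu4⟩ := id h4
    have hV2I : V2 ⊆ I := by
      intro v hv
      rcases hKorI v with hvK | hvI
      · exact absurd (hK (hV4K hu4) hvK (fun h => d24.le_bot ⟨hv, h ▸ hu4⟩)) (n42 u4 hu4 v hv)
      · exact hvI
    obtain ⟨w2, hw2⟩ := id h2
    have hV1K : V1 ⊆ K := by
      intro v hv
      rcases hKorI v with hvK | hvI
      · exact hvK
      · exact absurd (a12 v hv w2 hw2) (hI v hvI w2 (hV2I hw2))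
    refine ⟨V2, V1, V4, V3, mk_blowup G V2 V1 V4 V3 h2 h1 h4 h3
      d12.symm d24 d23 d14 d13 d34.symm ?_ ?_ ?_ ?_ ?_ ?_ ?_⟩
    · rw [← huniv]; ext v; simp only [Set.mem_union]; tauto
    · exact hK.subset (Set.union_subset hV1K hV4K)
    · intro u hu v hv
      exact hI u (Set.union_subset hV2I hV3I hu) v (Set.union_subset hV2I hV3I hv)
    · exact fun u hu v hv => (a12 v hv u hu).symm
    · exact fun u hu v hv => fun h => (n42 v hv u hu) h.symm
    · exact fun u hu v hv => (a43 v hv u hu).symm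
    · exact fun u hu v hv => fun h => (n13 v hv u hu) h.symm
  · -- V1 ⊆ I, so V2 ⊆ K, V4 ⊆ I, V3 ⊆ K; blowup A = V1, B = V2, C = V3, D = V4
    have hV1I : V1 ⊆ I := by
      intro v hv
      rcases hKorI v with hvK | hvI
      · exact absurd ⟨v, hv, hvK⟩ hc
      · exact hvI
    obtain ⟨w1, hw1⟩ := id h1
    have hV2K : V2 ⊆ K := by
      intro v hv
      rcases hKorI v with hvK | hvI
      · exact hvK
      · exact absurd (a12 w1 hw1 v hv) (hI w1 (hV1I hw1) v hvI)
    obtain ⟨u2, hu2⟩ := id h2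
    have hV4I : V4 ⊆ I := by
      intro v hv
      rcases hKorI v with hvK | hvI
      · exact absurd (hK hvK (hV2K hu2) (fun h => d24.le_bot ⟨hu2, h ▸ hv⟩)) (n42 v hv u2 hu2)
      · exact hvI
    obtain ⟨u4, hu4⟩ := id h4
    have hV3K : V3 ⊆ K := by
      intro v hv
      rcases hKorI v with hvK | hvI
      · exact hvK
      · exact absurd (a43 u4 hu4 v hv) (hI u4 (hV4I hu4) v hvI)
    refine ⟨V1, V2, V3, V4, mk_blowup G V1 V2 V3 V4 h1 h2 h3 h4
      d12 d13 d14 d23 d24 d34 huniv ?_ ?_ a12 n13 a43 n42⟩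
    · exact hK.subset (Set.union_subset hV2K hV3K)
    · intro u hu v hv
      exact hI u (Set.union_subset hV1I hV4I hu) v (Set.union_subset hV1I hV4I hv)

lemma zgraph_adj (k : ℕ) (p q : Fin 4 × Fin k) :
    (Zgraph k).Adj p q ↔ p ≠ q ∧
      ((p.1 = q.1 ∧ (p.1.val = 1 ∨ p.1.val = 2)) ∨
        p.1.val + 1 = q.1.val ∨ q.1.val + 1 = p.1.val) := by
  simp only [Zgraph, fromRel_adj]
  constructor
  · rintro ⟨hne, h | h⟩
    · exact ⟨hne, by tauto⟩
    · refine ⟨hne, ?_⟩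
      rcases h with ⟨h1, h2⟩ | h | h
      · exact Or.inl ⟨h1.symm, by rw [← h1]; tauto⟩
      · tauto
      · tauto
  · rintro ⟨hne, h⟩
    exact ⟨hne, Or.inl h⟩

lemma blowup_deg {V : Type*} [Finite V] (G : SimpleGraph V) {A B C D : Set V}
    (h : IsBlowup G A B C D) :
    (∀ v ∈ A, deg G v = B.ncard) ∧
    (∀ v ∈ B, deg G v = A.ncard + B.ncard + C.ncard - 1) ∧
    (∀ v ∈ C, deg G v = B.ncard + C.ncard + D.ncard - 1) ∧
    (∀ v ∈ D, deg G v = C.ncard) := by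
  obtain ⟨hA, hB, hC, hD, dAB, dAC, dAD, dBC, dBD, dCD, huniv, hadj⟩ := h
  have dab := Set.disjoint_left.mp dAB
  have dac := Set.disjoint_left.mp dAC
  have dad := Set.disjoint_left.mp dAD
  have dbc := Set.disjoint_left.mp dBC
  have dbd := Set.disjoint_left.mp dBD
  have dcd := Set.disjoint_left.mp dCD
  refine ⟨?_, ?_, ?_, ?_⟩
  · intro v hv
    have : G.neighborSet v = B := by
      ext w
      simp only [mem_neighborSet, hadj v w]
      constructor
      · rintro ⟨hne, hp⟩
        rcases hp with ⟨h1, h2⟩|⟨h1, h2⟩|⟨h1, h2⟩|⟨h1, h2⟩|⟨h1, h2⟩|⟨h1, h2⟩|⟨h1, h2⟩|⟨h1, h2⟩ <;>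
          first
          | exact h2
          | exact absurd h1 (fun h1 => dab hv h1)
          | exact absurd h1 (fun h1 => dac hv h1)
          | exact absurd h1 (fun h1 => dad hv h1)
      · intro hw
        exact ⟨fun h => dab hv (h ▸ hw), Or.inr (Or.inr (Or.inl ⟨hv, hw⟩))⟩
    rw [deg, this]
  · intro v hv
    have : G.neighborSet v = (A ∪ B ∪ C) \ {v} := by
      ext w
      simp only [mem_neighborSet, hadj v w, Set.mem_diff, Set.mem_union, Set.mem_singleton_iff]
      constructor
      · rintro ⟨hne, hp⟩
        refine ⟨?_, fun h => hne h.symm⟩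
        rcases hp with ⟨h1, h2⟩|⟨h1, h2⟩|⟨h1, h2⟩|⟨h1, h2⟩|⟨h1, h2⟩|⟨h1, h2⟩|⟨h1, h2⟩|⟨h1, h2⟩ <;>
          first
          | exact Or.inl (Or.inl h2)
          | exact Or.inl (Or.inr h2)
          | exact Or.inr h2
          | exact absurd h1 (fun h1 => dab h1 hv)
          | exact absurd h1 (fun h1 => dbc hv h1)
          | exact absurd h1 (fun h1 => dbd hv h1)
      · rintro ⟨hw, hne⟩
        refine ⟨fun h => hne (h.symm), ?_⟩
        rcases hw with (hw | hw) | hw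
        · exact Or.inr (Or.inr (Or.inr (Or.inl ⟨hv, hw⟩)))
        · exact Or.inl ⟨hv, hw⟩
        · exact Or.inr (Or.inr (Or.inr (Or.inr (Or.inl ⟨hv, hw⟩))))
    rw [deg, this]
    rw [Set.ncard_diff_singleton_of_mem (Set.mem_union_left _ (Set.mem_union_right _ hv)),
        Set.ncard_union_eq (by rw [Set.disjoint_union_left]; exact ⟨dAC, dBC⟩),
        Set.ncard_union_eq dAB]
  · intro v hv
    have : G.neighborSet v = (B ∪ C ∪ D) \ {v} := by
      ext w
      simp only [mem_neighborSet, hadj v w, Set.mem_diff, Set.mem_union, Set.mem_singleton_iff]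
      constructor
      · rintro ⟨hne, hp⟩
        refine ⟨?_, fun h => hne h.symm⟩
        rcases hp with ⟨h1, h2⟩|⟨h1, h2⟩|⟨h1, h2⟩|⟨h1, h2⟩|⟨h1, h2⟩|⟨h1, h2⟩|⟨h1, h2⟩|⟨h1, h2⟩ <;>
          first
          | exact Or.inl (Or.inl h2)
          | exact Or.inl (Or.inr h2)
          | exact Or.inr h2
          | exact absurd h1 (fun h1 => dac h1 hv)
          | exact absurd h1 (fun h1 => dbc h1 hv)
          | exact absurd h1 (fun h1 => dcd hv h1)
      · rintro ⟨hw, hne⟩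
        refine ⟨fun h => hne (h.symm), ?_⟩
        rcases hw with (hw | hw) | hw
        · exact Or.inr (Or.inr (Or.inr (Or.inr (Or.inr (Or.inl ⟨hv, hw⟩)))))
        · exact Or.inr (Or.inl ⟨hv, hw⟩)
        · exact Or.inr (Or.inr (Or.inr (Or.inr (Or.inr (Or.inr (Or.inl ⟨hv, hw⟩))))))
    rw [deg, this]
    rw [Set.ncard_diff_singleton_of_mem (Set.mem_union_left _ (Set.mem_union_right _ hv)),
        Set.ncard_union_eq (by rw [Set.disjoint_union_left]; exact ⟨dBD, dCD⟩),
        Set.ncard_union_eq dBC]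
  · intro v hv
    have : G.neighborSet v = C := by
      ext w
      simp only [mem_neighborSet, hadj v w]
      constructor
      · rintro ⟨hne, hp⟩
        rcases hp with ⟨h1, h2⟩|⟨h1, h2⟩|⟨h1, h2⟩|⟨h1, h2⟩|⟨h1, h2⟩|⟨h1, h2⟩|⟨h1, h2⟩|⟨h1, h2⟩ <;>
          first
          | exact h2
          | exact absurd h1 (fun h1 => dad h1 hv)
          | exact absurd h1 (fun h1 => dbd h1 hv)
          | exact absurd h1 (fun h1 => dcd h1 hv)
      · intro hw
        exact ⟨fun h => dcd (h ▸ hw) hv, Or.inr (Or.inr (Or.inr (Or.inr (Or.inr (Or.inr (Or.inr ⟨hv, hw⟩))))))⟩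
    rw [deg, this]

lemma blowup_mult {V : Type*} [Finite V] (G : SimpleGraph V) {A B C D : Set V}
    (h : IsBlowup G A B C D) (t : ℕ) :
    {v | deg G v = t}.ncard =
      (if B.ncard = t then A.ncard else 0) +
      (if A.ncard + B.ncard + C.ncard - 1 = t then B.ncard else 0) +
      (if B.ncard + C.ncard + D.ncard - 1 = t then C.ncard else 0) +
      (if C.ncard = t then D.ncard else 0) := by
  obtain ⟨hdA, hdB, hdC, hdD⟩ := blowup_deg G h
  obtain ⟨hA, hB, hC, hD, dAB, dAC, dAD, dBC, dBD, dCD, huniv, hadj⟩ := h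
  set S : Set V := {v | deg G v = t} with hS
  have hcover : S = (S ∩ A) ∪ (S ∩ B) ∪ (S ∩ C) ∪ (S ∩ D) := by
    ext v
    have hv : v ∈ A ∪ B ∪ C ∪ D := huniv ▸ Set.mem_univ v
    simp only [Set.mem_union, Set.mem_inter_iff] at hv ⊢
    tauto
  have e1 : (S ∩ A).ncard = if B.ncard = t then A.ncard else 0 := by
    split_ifs with ht
    · congr 1
      rw [Set.inter_eq_right]
      intro v hv; exact (hdA v hv).trans ht
    · rw [show S ∩ A = ∅ from ?_, Set.ncard_empty]
      ext v; simp only [Set.mem_inter_iff, Set.mem_empty_iff_false, iff_false, not_and]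
      intro hv hvA; exact ht ((hdA v hvA).symm.trans hv)
  have e2 : (S ∩ B).ncard = if A.ncard + B.ncard + C.ncard - 1 = t then B.ncard else 0 := by
    split_ifs with ht
    · congr 1
      rw [Set.inter_eq_right]
      intro v hv; exact (hdB v hv).trans ht
    · rw [show S ∩ B = ∅ from ?_, Set.ncard_empty]
      ext v; simp only [Set.mem_inter_iff, Set.mem_empty_iff_false, iff_false, not_and]
      intro hv hvB; exact ht ((hdB v hvB).symm.trans hv)
  have e3 : (S ∩ C).ncard = if B.ncard + C.ncard + D.ncard - 1 = t then C.ncard else 0 := by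
    split_ifs with ht
    · congr 1
      rw [Set.inter_eq_right]
      intro v hv; exact (hdC v hv).trans ht
    · rw [show S ∩ C = ∅ from ?_, Set.ncard_empty]
      ext v; simp only [Set.mem_inter_iff, Set.mem_empty_iff_false, iff_false, not_and]
      intro hv hvC; exact ht ((hdC v hvC).symm.trans hv)
  have e4 : (S ∩ D).ncard = if C.ncard = t then D.ncard else 0 := by
    split_ifs with ht
    · congr 1
      rw [Set.inter_eq_right]
      intro v hv; exact (hdD v hv).trans ht
    · rw [show S ∩ D = ∅ from ?_, Set.ncard_empty]
      ext v; simp only [Set.mem_inter_iff, Set.mem_empty_iff_false, iff_false, not_and]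
      intro hv hvD; exact ht ((hdD v hvD).symm.trans hv)
  calc S.ncard = ((S ∩ A) ∪ (S ∩ B) ∪ (S ∩ C) ∪ (S ∩ D)).ncard := by rw [← hcover]
    _ = (S ∩ A).ncard + (S ∩ B).ncard + (S ∩ C).ncard + (S ∩ D).ncard := by
        rw [Set.ncard_union_eq, Set.ncard_union_eq, Set.ncard_union_eq]
        · exact (dAB.mono Set.inter_subset_right Set.inter_subset_right)
        · rw [Set.disjoint_union_left]
          exact ⟨dAC.mono Set.inter_subset_right Set.inter_subset_right,
                 dBC.mono Set.inter_subset_right Set.inter_subset_right⟩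
        · rw [Set.disjoint_union_left, Set.disjoint_union_left]
          exact ⟨⟨dAD.mono Set.inter_subset_right Set.inter_subset_right,
                 dBD.mono Set.inter_subset_right Set.inter_subset_right⟩,
                 dCD.mono Set.inter_subset_right Set.inter_subset_right⟩
    _ = _ := by rw [e1, e2, e3, e4]

lemma sc_mult_symm {V : Type*} [Finite V] (G : SimpleGraph V) (hsc : IsSelfCompl G)
    (s t : ℕ) (hst : s + t = Nat.card V - 1) :
    {v | deg G v = s}.ncard = {v | deg G v = t}.ncard := by
  obtain ⟨φ⟩ := hsc
  have hsum : ∀ v : V, deg G v + deg Gᶜ v = Nat.card V - 1 := by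
    intro v
    have h1 : Gᶜ.neighborSet v = (G.neighborSet v)ᶜ \ {v} := neighborSet_compl G v
    have hvmem : v ∈ (G.neighborSet v)ᶜ := fun h => G.irrefl h
    have h2 : (Gᶜ.neighborSet v).ncard = (G.neighborSet v)ᶜ.ncard - 1 := by
      rw [h1, Set.ncard_diff_singleton_of_mem hvmem]
    have h3 : (G.neighborSet v).ncard + (G.neighborSet v)ᶜ.ncard = Nat.card V :=
      Set.ncard_add_ncard_compl _
    have h4 : 0 < (G.neighborSet v)ᶜ.ncard := (Set.ncard_pos (Set.toFinite _)).mpr ⟨v, hvmem⟩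
    simp only [deg]
    omega
  have hdegc : ∀ v : V, deg Gᶜ (φ v) = deg G v := by
    intro v
    have himg : Gᶜ.neighborSet (φ v) = φ '' (G.neighborSet v) := by
      ext w
      simp only [mem_neighborSet, Set.mem_image]
      constructor
      · intro hw
        refine ⟨φ.symm w, ?_, φ.apply_symm_apply w⟩
        have h0 : Gᶜ.Adj (φ v) (φ (φ.symm w)) := by rwa [φ.apply_symm_apply]
        exact φ.map_adj_iff.mp h0
      · rintro ⟨u, hu, rfl⟩
        exact φ.map_adj_iff.mpr hu
    rw [deg, deg, himg, Set.ncard_image_of_injective _ φ.injective]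
  have hkey : ∀ v : V, deg G (φ v) + deg G v = Nat.card V - 1 := by
    intro v
    have := hsum (φ v)
    rw [hdegc v] at this
    exact this
  have himg : φ '' {v | deg G v = s} = {v | deg G v = t} := by
    ext w
    simp only [Set.mem_image, Set.mem_setOf_eq]
    constructor
    · rintro ⟨u, hu, rfl⟩
      have := hkey u
      omega
    · intro hw
      refine ⟨φ.symm w, ?_, φ.apply_symm_apply w⟩
      have h1 := hkey (φ.symm w)
      rw [φ.apply_symm_apply] at h1
      omega
  rw [← himg, Set.ncard_image_of_injective _ φ.injective]

lemma blowup_iso {V : Type*} [Finite V] (G : SimpleGraph V) {A B C D : Set V} {k : ℕ}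
    (h : IsBlowup G A B C D)
    (hka : A.ncard = k) (hkb : B.ncard = k) (hkc : C.ncard = k) (hkd : D.ncard = k) :
    Nonempty (G ≃g Zgraph k) := by
  classical
  letI : Fintype V := Fintype.ofFinite V
  obtain ⟨hAne, hBne, hCne, hDne, dAB, dAC, dAD, dBC, dBD, dCD, huniv, hadj⟩ := h
  have dab := Set.disjoint_left.mp dAB
  have dac := Set.disjoint_left.mp dAC
  have dad := Set.disjoint_left.mp dAD
  have dbc := Set.disjoint_left.mp dBC
  have dbd := Set.disjoint_left.mp dBD
  have dcd := Set.disjoint_left.mp dCD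
  have cardeq : ∀ (S : Set V), S.ncard = k → Fintype.card ↥S = k := by
    intro S hS
    rw [← Nat.card_eq_fintype_card, Nat.card_coe_set_eq, hS]
  have eA : ↥A ≃ Fin k := Fintype.equivFinOfCardEq (cardeq A hka)
  have eB : ↥B ≃ Fin k := Fintype.equivFinOfCardEq (cardeq B hkb)
  have eC : ↥C ≃ Fin k := Fintype.equivFinOfCardEq (cardeq C hkc)
  have eD : ↥D ≃ Fin k := Fintype.equivFinOfCardEq (cardeq D hkd)
  set g : Fin 4 × Fin k → V := fun p =>
    if p.1 = 0 then (eA.symm p.2 : V) else if p.1 = 1 then (eB.symm p.2 : V)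
    else if p.1 = 2 then (eC.symm p.2 : V) else (eD.symm p.2 : V) with hg
  have hga : ∀ p : Fin 4 × Fin k, p.1 = 0 → g p = (eA.symm p.2 : V) := by
    intro p hp; simp [hg, hp]
  have hgb : ∀ p : Fin 4 × Fin k, p.1 = 1 → g p = (eB.symm p.2 : V) := by
    intro p hp; simp [hg, hp]
  have hgc : ∀ p : Fin 4 × Fin k, p.1 = 2 → g p = (eC.symm p.2 : V) := by
    intro p hp; simp [hg, hp]
  have hgd : ∀ p : Fin 4 × Fin k, p.1 = 3 → g p = (eD.symm p.2 : V) := by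
    intro p hp; simp [hg, hp]
  have key : ∀ p : Fin 4 × Fin k,
      (p.1 = 0 ∧ g p ∈ A) ∨ (p.1 = 1 ∧ g p ∈ B) ∨ (p.1 = 2 ∧ g p ∈ C) ∨ (p.1 = 3 ∧ g p ∈ D) := by
    rintro ⟨i, x⟩
    fin_cases i
    · exact Or.inl ⟨rfl, by rw [hga _ rfl]; exact (eA.symm x).2⟩
    · exact Or.inr (Or.inl ⟨rfl, by rw [hgb _ rfl]; exact (eB.symm x).2⟩)
    · exact Or.inr (Or.inr (Or.inl ⟨rfl, by rw [hgc _ rfl]; exact (eC.symm x).2⟩))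
    · exact Or.inr (Or.inr (Or.inr ⟨rfl, by rw [hgd _ rfl]; exact (eD.symm x).2⟩))
  have ginj : Function.Injective g := by
    intro p q he
    rcases key p with ⟨hp1, hgp⟩|⟨hp1, hgp⟩|⟨hp1, hgp⟩|⟨hp1, hgp⟩ <;>
      rcases key q with ⟨hq1, hgq⟩|⟨hq1, hgq⟩|⟨hq1, hgq⟩|⟨hq1, hgq⟩ <;>
      rw [he] at hgp
    · rw [hga p hp1, hga q hq1] at he
      exact Prod.ext (hp1.trans hq1.symm) (eA.symm.injective (Subtype.coe_injective he))
    · exact (dab hgp hgq).elim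
    · exact (dac hgp hgq).elim
    · exact (dad hgp hgq).elim
    · exact (dab hgq hgp).elim
    · rw [hgb p hp1, hgb q hq1] at he
      exact Prod.ext (hp1.trans hq1.symm) (eB.symm.injective (Subtype.coe_injective he))
    · exact (dbc hgp hgq).elim
    · exact (dbd hgp hgq).elim
    · exact (dac hgq hgp).elim
    · exact (dbc hgq hgp).elim
    · rw [hgc p hp1, hgc q hq1] at he
      exact Prod.ext (hp1.trans hq1.symm) (eC.symm.injective (Subtype.coe_injective he))
    · exact (dcd hgp hgq).elim
    · exact (dad hgq hgp).elim
    · exact (dbd hgq hgp).elim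
    · exact (dcd hgq hgp).elim
    · rw [hgd p hp1, hgd q hq1] at he
      exact Prod.ext (hp1.trans hq1.symm) (eD.symm.injective (Subtype.coe_injective he))
  have gsurj : Function.Surjective g := by
    intro v
    have hv : v ∈ A ∪ B ∪ C ∪ D := huniv ▸ Set.mem_univ v
    rcases hv with ((hv | hv) | hv) | hv
    · exact ⟨(0, eA ⟨v, hv⟩), by rw [hga _ rfl]; simp⟩
    · exact ⟨(1, eB ⟨v, hv⟩), by rw [hgb _ rfl]; simp⟩
    · exact ⟨(2, eC ⟨v, hv⟩), by rw [hgc _ rfl]; simp⟩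
    · exact ⟨(3, eD ⟨v, hv⟩), by rw [hgd _ rfl]; simp⟩
  -- adjacency facts
  have adjAB : ∀ u ∈ A, ∀ v ∈ B, G.Adj u v := fun u hu v hv =>
    (hadj u v).mpr ⟨fun e => dab (e ▸ hu) hv, Or.inr (Or.inr (Or.inl ⟨hu, hv⟩))⟩
  have adjBA : ∀ u ∈ B, ∀ v ∈ A, G.Adj u v := fun u hu v hv => (adjAB v hv u hu).symm
  have adjBC : ∀ u ∈ B, ∀ v ∈ C, G.Adj u v := fun u hu v hv =>
    (hadj u v).mpr ⟨fun e => dbc (e ▸ hu) hv, Or.inr (Or.inr (Or.inr (Or.inr (Or.inl ⟨hu, hv⟩))))⟩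
  have adjCB : ∀ u ∈ C, ∀ v ∈ B, G.Adj u v := fun u hu v hv => (adjBC v hv u hu).symm
  have adjCD : ∀ u ∈ C, ∀ v ∈ D, G.Adj u v := fun u hu v hv =>
    (hadj u v).mpr ⟨fun e => dcd (e ▸ hu) hv,
      Or.inr (Or.inr (Or.inr (Or.inr (Or.inr (Or.inr (Or.inl ⟨hu, hv⟩))))))⟩
  have adjDC : ∀ u ∈ D, ∀ v ∈ C, G.Adj u v := fun u hu v hv => (adjCD v hv u hu).symm
  have adjBB : ∀ u ∈ B, ∀ v ∈ B, u ≠ v → G.Adj u v := fun u hu v hv hne =>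
    (hadj u v).mpr ⟨hne, Or.inl ⟨hu, hv⟩⟩
  have adjCC : ∀ u ∈ C, ∀ v ∈ C, u ≠ v → G.Adj u v := fun u hu v hv hne =>
    (hadj u v).mpr ⟨hne, Or.inr (Or.inl ⟨hu, hv⟩)⟩
  have nadjAA : ∀ u ∈ A, ∀ v ∈ A, ¬ G.Adj u v := by
    intro u hu v hv hA'
    rcases (hadj u v).mp hA' with ⟨-, ⟨h1,h2⟩|⟨h1,h2⟩|⟨h1,h2⟩|⟨h1,h2⟩|⟨h1,h2⟩|⟨h1,h2⟩|⟨h1,h2⟩|⟨h1,h2⟩⟩ <;>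
      first | exact dab hu h1 | exact dac hu h1 | exact dad hu h1
            | exact dab hv h2 | exact dac hv h2 | exact dad hv h2
  have nadjAC : ∀ u ∈ A, ∀ v ∈ C, ¬ G.Adj u v := by
    intro u hu v hv hA'
    rcases (hadj u v).mp hA' with ⟨-, ⟨h1,h2⟩|⟨h1,h2⟩|⟨h1,h2⟩|⟨h1,h2⟩|⟨h1,h2⟩|⟨h1,h2⟩|⟨h1,h2⟩|⟨h1,h2⟩⟩ <;>
      first | exact dab hu h1 | exact dac hu h1 | exact dad hu h1
            | exact dbc h2 hv | exact dcd hv h2 | exact dac h2 hv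
  have nadjCA : ∀ u ∈ C, ∀ v ∈ A, ¬ G.Adj u v := fun u hu v hv h => nadjAC v hv u hu h.symm
  have nadjAD : ∀ u ∈ A, ∀ v ∈ D, ¬ G.Adj u v := by
    intro u hu v hv hA'
    rcases (hadj u v).mp hA' with ⟨-, ⟨h1,h2⟩|⟨h1,h2⟩|⟨h1,h2⟩|⟨h1,h2⟩|⟨h1,h2⟩|⟨h1,h2⟩|⟨h1,h2⟩|⟨h1,h2⟩⟩ <;>
      first | exact dab hu h1 | exact dac hu h1 | exact dad hu h1
            | exact dbd h2 hv | exact dcd h2 hv | exact dad h2 hv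
  have nadjDA : ∀ u ∈ D, ∀ v ∈ A, ¬ G.Adj u v := fun u hu v hv h => nadjAD v hv u hu h.symm
  have nadjBD : ∀ u ∈ B, ∀ v ∈ D, ¬ G.Adj u v := by
    intro u hu v hv hA'
    rcases (hadj u v).mp hA' with ⟨-, ⟨h1,h2⟩|⟨h1,h2⟩|⟨h1,h2⟩|⟨h1,h2⟩|⟨h1,h2⟩|⟨h1,h2⟩|⟨h1,h2⟩|⟨h1,h2⟩⟩ <;>
      first | exact dbc hu h1 | exact dbd hu h1 | exact dab h1 hu
            | exact dbd h2 hv | exact dcd h2 hv | exact dad h2 hv | exact dab h2 hv | exact dbc h2 hv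
  have nadjDB : ∀ u ∈ D, ∀ v ∈ B, ¬ G.Adj u v := fun u hu v hv h => nadjBD v hv u hu h.symm
  have nadjDD : ∀ u ∈ D, ∀ v ∈ D, ¬ G.Adj u v := by
    intro u hu v hv hA'
    rcases (hadj u v).mp hA' with ⟨-, ⟨h1,h2⟩|⟨h1,h2⟩|⟨h1,h2⟩|⟨h1,h2⟩|⟨h1,h2⟩|⟨h1,h2⟩|⟨h1,h2⟩|⟨h1,h2⟩⟩ <;>
      first | exact dbd h1 hu | exact dcd h1 hu | exact dad h1 hu
            | exact dbd h2 hv | exact dcd h2 hv | exact dad h2 hv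
  have gadj : ∀ p q : Fin 4 × Fin k, G.Adj (g p) (g q) ↔ (Zgraph k).Adj p q := by
    intro p q
    rw [zgraph_adj]
    have pne : p.1 ≠ q.1 → p ≠ q := fun h e => h (congrArg Prod.fst e)
    rcases key p with ⟨hp1, hgp⟩|⟨hp1, hgp⟩|⟨hp1, hgp⟩|⟨hp1, hgp⟩ <;>
      rcases key q with ⟨hq1, hgq⟩|⟨hq1, hgq⟩|⟨hq1, hgq⟩|⟨hq1, hgq⟩
    · exact iff_of_false (nadjAA _ hgp _ hgq)
        (by rintro ⟨-, hor⟩; rw [hp1, hq1] at hor; revert hor; decide)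
    · exact iff_of_true (adjAB _ hgp _ hgq)
        ⟨pne (by rw [hp1, hq1]; decide), by rw [hp1, hq1]; right; left; decide⟩
    · exact iff_of_false (nadjAC _ hgp _ hgq)
        (by rintro ⟨-, hor⟩; rw [hp1, hq1] at hor; revert hor; decide)
    · exact iff_of_false (nadjAD _ hgp _ hgq)
        (by rintro ⟨-, hor⟩; rw [hp1, hq1] at hor; revert hor; decide)
    · exact iff_of_true (adjBA _ hgp _ hgq)
        ⟨pne (by rw [hp1, hq1]; decide), by rw [hp1, hq1]; right; right; decide⟩
    · constructor
      · intro hadj'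
        exact ⟨fun e => hadj'.ne (by rw [e]), by rw [hp1, hq1]; left; exact ⟨rfl, by decide⟩⟩
      · rintro ⟨hne, -⟩
        exact adjBB _ hgp _ hgq (fun e => hne (ginj e))
    · exact iff_of_true (adjBC _ hgp _ hgq)
        ⟨pne (by rw [hp1, hq1]; decide), by rw [hp1, hq1]; right; left; decide⟩
    · exact iff_of_false (nadjBD _ hgp _ hgq)
        (by rintro ⟨-, hor⟩; rw [hp1, hq1] at hor; revert hor; decide)
    · exact iff_of_false (nadjCA _ hgp _ hgq)
        (by rintro ⟨-, hor⟩; rw [hp1, hq1] at hor; revert hor; decide)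
    · exact iff_of_true (adjCB _ hgp _ hgq)
        ⟨pne (by rw [hp1, hq1]; decide), by rw [hp1, hq1]; right; right; decide⟩
    · constructor
      · intro hadj'
        exact ⟨fun e => hadj'.ne (by rw [e]), by rw [hp1, hq1]; left; exact ⟨rfl, by decide⟩⟩
      · rintro ⟨hne, -⟩
        exact adjCC _ hgp _ hgq (fun e => hne (ginj e))
    · exact iff_of_true (adjCD _ hgp _ hgq)
        ⟨pne (by rw [hp1, hq1]; decide), by rw [hp1, hq1]; right; left; decide⟩
    · exact iff_of_false (nadjDA _ hgp _ hgq)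
        (by rintro ⟨-, hor⟩; rw [hp1, hq1] at hor; revert hor; decide)
    · exact iff_of_false (nadjDB _ hgp _ hgq)
        (by rintro ⟨-, hor⟩; rw [hp1, hq1] at hor; revert hor; decide)
    · exact iff_of_true (adjDC _ hgp _ hgq)
        ⟨pne (by rw [hp1, hq1]; decide), by rw [hp1, hq1]; right; right; decide⟩
    · exact iff_of_false (nadjDD _ hgp _ hgq)
        (by rintro ⟨-, hor⟩; rw [hp1, hq1] at hor; revert hor; decide)
  let e : (Fin 4 × Fin k) ≃ V := Equiv.ofBijective g ⟨ginj, gsurj⟩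
  have iso : Zgraph k ≃g G := ⟨e, by intro p q; exact gadj p q⟩
  exact ⟨iso.symm⟩

/-- A self-complementary split graph admits a rectangle partition if
and only if it is isomorphic to `Z_k` for some `k ≥ 1`. -/
theorem scs_rectangle_partition_iff {V : Type*} [Finite V] (G : SimpleGraph V)
    (hsplit : IsSplit G) (hsc : IsSelfCompl G) :
    (∃ V1 V2 V3 V4, IsRectanglePartition G V1 V2 V3 V4) ↔
    ∃ k : ℕ, 1 ≤ k ∧ Nonempty (G ≃g Zgraph k) := by
  have hfour : ∀ i : Fin 4, i = 0 ∨ i = 1 ∨ i = 2 ∨ i = 3 := by decide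
  constructor
  · rintro ⟨V1, V2, V3, V4, hrect⟩
    obtain ⟨A, B, C, D, hblow⟩ := exists_blowup G hsplit hrect
    obtain ⟨hAne, hBne, hCne, hDne, dAB, dAC, dAD, dBC, dBD, dCD, huniv, hadj⟩ := id hblow
    have ha : 1 ≤ A.ncard := (Set.ncard_pos (Set.toFinite _)).mpr hAne
    have hb : 1 ≤ B.ncard := (Set.ncard_pos (Set.toFinite _)).mpr hBne
    have hc : 1 ≤ C.ncard := (Set.ncard_pos (Set.toFinite _)).mpr hCne
    have hd : 1 ≤ D.ncard := (Set.ncard_pos (Set.toFinite _)).mpr hDne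
    have hn : Nat.card V = A.ncard + B.ncard + C.ncard + D.ncard := by
      rw [← Set.ncard_univ, ← huniv,
          Set.ncard_union_eq (by
            rw [Set.disjoint_union_left, Set.disjoint_union_left]
            exact ⟨⟨dAD, dBD⟩, dCD⟩),
          Set.ncard_union_eq (by
            rw [Set.disjoint_union_left]
            exact ⟨dAC, dBC⟩),
          Set.ncard_union_eq dAB]
    have H : ∀ s t : ℕ, s + t = A.ncard + B.ncard + C.ncard + D.ncard - 1 →
        ((if B.ncard = s then A.ncard else 0) +
         (if A.ncard + B.ncard + C.ncard - 1 = s then B.ncard else 0) +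
         (if B.ncard + C.ncard + D.ncard - 1 = s then C.ncard else 0) +
         (if C.ncard = s then D.ncard else 0)) =
        ((if B.ncard = t then A.ncard else 0) +
         (if A.ncard + B.ncard + C.ncard - 1 = t then B.ncard else 0) +
         (if B.ncard + C.ncard + D.ncard - 1 = t then C.ncard else 0) +
         (if C.ncard = t then D.ncard else 0)) := by
      intro s t hst
      rw [← blowup_mult G hblow s, ← blowup_mult G hblow t]
      exact sc_mult_symm G hsc s t (by omega)
    obtain ⟨e1, e2, e3⟩ := scs_arith _ _ _ _ ha hb hc hd H
    exact ⟨A.ncard, ha,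
      blowup_iso G hblow rfl e1.symm (e1.trans e2).symm ((e1.trans e2).trans e3).symm⟩
  · rintro ⟨k, hk, ⟨e⟩⟩
    refine ⟨{v | (e v).1 = 0}, {v | (e v).1 = 1}, {v | (e v).1 = 2}, {v | (e v).1 = 3},
      ?_, ?_, ?_, ?_, ?_, ?_, ?_, ?_, ?_, ?_, ?_, ?_, ?_, ?_, ?_⟩
    · exact ⟨e.symm (0, ⟨0, hk⟩), by simp⟩
    · exact ⟨e.symm (1, ⟨0, hk⟩), by simp⟩
    · exact ⟨e.symm (2, ⟨0, hk⟩), by simp⟩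
    · exact ⟨e.symm (3, ⟨0, hk⟩), by simp⟩
    · exact Set.disjoint_left.mpr fun {a} h1 h2 => absurd (Eq.trans (Eq.symm h1) h2) (by decide)
    · exact Set.disjoint_left.mpr fun {a} h1 h2 => absurd (Eq.trans (Eq.symm h1) h2) (by decide)
    · exact Set.disjoint_left.mpr fun {a} h1 h2 => absurd (Eq.trans (Eq.symm h1) h2) (by decide)
    · exact Set.disjoint_left.mpr fun {a} h1 h2 => absurd (Eq.trans (Eq.symm h1) h2) (by decide)
    · exact Set.disjoint_left.mpr fun {a} h1 h2 => absurd (Eq.trans (Eq.symm h1) h2) (by decide)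
    · exact Set.disjoint_left.mpr fun {a} h1 h2 => absurd (Eq.trans (Eq.symm h1) h2) (by decide)
    · ext v
      simp only [Set.mem_union, Set.mem_setOf_eq, Set.mem_univ, iff_true]
      have := hfour (e v).1
      tauto
    · intro u hu v hv
      have hu' : (e u).1 = 0 := hu
      have hv' : (e v).1 = 1 := hv
      rw [← e.map_adj_iff, zgraph_adj]
      refine ⟨fun h => absurd (hu'.symm.trans ((congrArg Prod.fst h).trans hv')) (by decide), ?_⟩
      rw [hu', hv']
      decide
    · intro u hu v hv h
      have hu' : (e u).1 = 0 := hu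
      have hv' : (e v).1 = 2 := hv
      rw [← e.map_adj_iff, zgraph_adj] at h
      obtain ⟨-, hor⟩ := h
      rw [hu', hv'] at hor
      revert hor
      decide
    · intro u hu v hv
      have hu' : (e u).1 = 3 := hu
      have hv' : (e v).1 = 2 := hv
      rw [← e.map_adj_iff, zgraph_adj]
      refine ⟨fun h => absurd (hu'.symm.trans ((congrArg Prod.fst h).trans hv')) (by decide), ?_⟩
      rw [hu', hv']
      decide
    · intro u hu v hv h
      have hu' : (e u).1 = 3 := hu
      have hv' : (e v).1 = 1 := hv
      rw [← e.map_adj_iff, zgraph_adj] at h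
      obtain ⟨-, hor⟩ := h
      rw [hu', hv'] at hor
      revert hor
      decide
end

section
/- For every k >= 2, the degree sequence ((2k)^{4k+1}) is not forcibly self-complementary; that is, there exists a 2k-regular graph on 4k+1 vertices that is not self-complementary. -/
open SimpleGraph

/-! ### Auxiliary: the circulant graph on `ZMod (4k+1)` with jumps `1, …, k`. -/

/-- The circulant graph on `ℤ/(4k+1)` where `v ~ w` iff they differ by `±d` for some
`1 ≤ d ≤ k`. It is `2k`-regular; its complement has no `K₄` (for `k ≥ 2`), whereas for
`k ≥ 3` the graph itself contains `K₄`. -/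
def cg (k : ℕ) : SimpleGraph (ZMod (4*k+1)) where
  Adj v w := v ≠ w ∧ ∃ d ∈ Finset.Icc 1 k, (w = v + (d : ℕ) ∨ v = w + (d : ℕ))
  symm := by
    constructor
    rintro v w ⟨h, d, hd, h2⟩
    exact ⟨h.symm, d, hd, h2.symm⟩
  loopless := by constructor; rintro v ⟨h, _⟩; exact h rfl

instance (k : ℕ) : DecidableRel (cg k).Adj := by unfold cg; infer_instance

lemma cast_eq_zero_iff (k d : ℕ) (hd : d ≤ 4*k) : (d : ZMod (4*k+1)) = 0 ↔ d = 0 := by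
  rw [ZMod.natCast_eq_zero_iff]
  constructor
  · intro h
    by_contra hd0
    have := Nat.le_of_dvd (Nat.pos_of_ne_zero hd0) h
    omega
  · rintro rfl; exact dvd_zero _

lemma castInj (k d e : ℕ) (hd : d ≤ 4*k) (he : e ≤ 4*k)
    (h : (d : ZMod (4*k+1)) = (e : ZMod (4*k+1))) : d = e := by
  have h1 : (d : ZMod (4*k+1)).val = d := ZMod.val_cast_of_lt (by omega)
  have h2 : (e : ZMod (4*k+1)).val = e := ZMod.val_cast_of_lt (by omega)
  rw [← h1, ← h2, h]

lemma adj_iff (k : ℕ) (v w : ZMod (4*k+1)) :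
    (cg k).Adj v w ↔ ∃ d ∈ Finset.Icc 1 k, (w = v + (d : ℕ) ∨ w = v - (d : ℕ)) := by
  constructor
  · rintro ⟨hne, d, hd, h | h⟩
    · exact ⟨d, hd, Or.inl h⟩
    · exact ⟨d, hd, Or.inr (eq_sub_of_add_eq h.symm)⟩
  · rintro ⟨d, hd, h⟩
    simp only [Finset.mem_Icc] at hd
    have hd0 : ((d : ℕ) : ZMod (4*k+1)) ≠ 0 := by
      intro h0; rw [cast_eq_zero_iff k d (by omega)] at h0; omega
    rcases h with h | h
    · refine ⟨?_, d, Finset.mem_Icc.mpr hd, Or.inl h⟩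
      intro hvw; rw [hvw, left_eq_add] at h; exact hd0 h
    · refine ⟨?_, d, Finset.mem_Icc.mpr hd, Or.inr ?_⟩
      · intro hvw
        rw [hvw] at h
        have : (d : ZMod (4*k+1)) = 0 := by linear_combination h
        exact hd0 this
      · rw [h]; ring

/-- Key lemma: if `v + a = w + b` with `a, b ≤ k` then `v = w` or they are adjacent. -/
lemma key_s10 {k : ℕ} {v w : ZMod (4*k+1)} {a b : ℕ} (ha : a ≤ k) (hb : b ≤ k)
    (h : v + (a : ℕ) = w + (b : ℕ)) : v = w ∨ (cg k).Adj v w := by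
  rcases Nat.lt_trichotomy a b with hab | rfl | hab
  · right
    have hb' : (b : ZMod (4*k+1)) = ((b - a : ℕ) : ZMod (4*k+1)) + (a : ℕ) := by
      rw [← Nat.cast_add]
      congr 1
      omega
    rw [hb', ← add_assoc] at h
    have hv : v = w + ((b - a : ℕ) : ZMod (4*k+1)) := by
      exact add_right_cancel h
    refine ⟨?_, b - a, Finset.mem_Icc.mpr ⟨by omega, by omega⟩, Or.inr hv⟩
    intro hvw
    rw [hvw, left_eq_add, cast_eq_zero_iff k _ (by omega)] at hv
    omega
  · left; exact add_right_cancel h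
  · right
    have ha' : (a : ZMod (4*k+1)) = ((a - b : ℕ) : ZMod (4*k+1)) + (b : ℕ) := by
      rw [← Nat.cast_add]; congr 1; omega
    rw [ha', ← add_assoc] at h
    have hw : w = v + ((a - b : ℕ) : ZMod (4*k+1)) := (add_right_cancel h).symm
    refine ⟨?_, a - b, Finset.mem_Icc.mpr ⟨by omega, by omega⟩, Or.inl hw⟩
    intro hvw
    rw [← hvw, left_eq_add, cast_eq_zero_iff k _ (by omega)] at hw
    omega

lemma neighborFinset_cg (k : ℕ) (v : ZMod (4*k+1)) :
    (cg k).neighborFinset v =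
      ((Finset.Icc 1 k).image fun d : ℕ => v + (d : ℕ)) ∪
      ((Finset.Icc 1 k).image fun d : ℕ => v - (d : ℕ)) := by
  ext w
  simp only [mem_neighborFinset, adj_iff, Finset.mem_union, Finset.mem_image]
  aesop

lemma deg_cg (k : ℕ) (v : ZMod (4*k+1)) : deg (cg k) v = 2 * k := by
  have hdeg : deg (cg k) v = ((cg k).neighborFinset v).card := by
    rw [deg, neighborFinset_def, Set.ncard_eq_toFinset_card']
  rw [hdeg, neighborFinset_cg, Finset.card_union_of_disjoint, Finset.card_image_of_injOn,
    Finset.card_image_of_injOn, Nat.card_Icc]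
  · omega
  · intro d hd e he h
    simp only [Finset.mem_coe, Finset.mem_Icc] at hd he
    have : ((d : ℕ) : ZMod (4*k+1)) = (e : ℕ) := by
      simp only at h
      linear_combination -h
    exact castInj k d e (by omega) (by omega) this
  · intro d hd e he h
    simp only [Finset.mem_coe, Finset.mem_Icc] at hd he
    exact castInj k d e (by omega) (by omega) (by linear_combination h)
  · rw [Finset.disjoint_left]
    rintro w hw hw'
    simp only [Finset.mem_image, Finset.mem_Icc] at hw hw'
    obtain ⟨d, hd, rfl⟩ := hw
    obtain ⟨e, he, hvw⟩ := hw'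
    have : ((d + e : ℕ) : ZMod (4*k+1)) = 0 := by
      push_cast
      linear_combination -hvw
    rw [cast_eq_zero_iff k _ (by omega)] at this
    omega

/-! ### Invariants distinguishing `cg k` from its complement. -/

/-- The property of containing a `K₄`. -/
def hasK4 {V : Type*} (G : SimpleGraph V) : Prop :=
  ∃ a b c d : V, G.Adj a b ∧ G.Adj a c ∧ G.Adj a d ∧ G.Adj b c ∧ G.Adj b d ∧ G.Adj c d

lemma hasK4_of_iso {V W : Type*} {G : SimpleGraph V} {H : SimpleGraph W} (e : G ≃g H) :
    hasK4 G → hasK4 H := by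
  rintro ⟨a, b, c, d, h1, h2, h3, h4, h5, h6⟩
  exact ⟨e a, e b, e c, e d, e.map_rel_iff.mpr h1, e.map_rel_iff.mpr h2, e.map_rel_iff.mpr h3,
    e.map_rel_iff.mpr h4, e.map_rel_iff.mpr h5, e.map_rel_iff.mpr h6⟩

lemma adj_nat (k a b : ℕ) (hab : a < b) (h : b - a ≤ k) :
    (cg k).Adj (a : ZMod (4*k+1)) (b : ZMod (4*k+1)) := by
  rw [adj_iff]
  refine ⟨b - a, Finset.mem_Icc.mpr ⟨by omega, h⟩, Or.inl ?_⟩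
  rw [← Nat.cast_add]
  congr 1
  omega

lemma hasK4_cg (k : ℕ) (hk : 3 ≤ k) : hasK4 (cg k) := by
  refine ⟨(0:ℕ), (1:ℕ), (2:ℕ), (3:ℕ), ?_, ?_, ?_, ?_, ?_, ?_⟩ <;>
    exact adj_nat k _ _ (by omega) (by omega)

lemma not_hasK4_compl (k : ℕ) (hk : 2 ≤ k) : ¬ hasK4 (cg k)ᶜ := by
  rintro ⟨a, b, c, d, h1, h2, h3, h4, h5, h6⟩
  rw [compl_adj] at h1 h2 h3 h4 h5 h6
  set f : Fin 4 → ZMod (4*k+1) := ![a, b, c, d] with hf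
  have hne : ∀ i j, i ≠ j → f i ≠ f j ∧ ¬ (cg k).Adj (f i) (f j) := by
    intro i j hij
    have hsymm : ∀ x y : ZMod (4*k+1), ¬ (cg k).Adj x y → ¬ (cg k).Adj y x :=
      fun x y h h' => h h'.symm
    fin_cases i <;> fin_cases j <;>
      first
        | exact absurd rfl hij
        | exact ⟨h1.1, h1.2⟩ | exact ⟨h2.1, h2.2⟩ | exact ⟨h3.1, h3.2⟩
        | exact ⟨h4.1, h4.2⟩ | exact ⟨h5.1, h5.2⟩ | exact ⟨h6.1, h6.2⟩
        | exact ⟨fun e => h1.1 e.symm, hsymm _ _ h1.2⟩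
        | exact ⟨fun e => h2.1 e.symm, hsymm _ _ h2.2⟩
        | exact ⟨fun e => h3.1 e.symm, hsymm _ _ h3.2⟩
        | exact ⟨fun e => h4.1 e.symm, hsymm _ _ h4.2⟩
        | exact ⟨fun e => h5.1 e.symm, hsymm _ _ h5.2⟩
        | exact ⟨fun e => h6.1 e.symm, hsymm _ _ h6.2⟩
  have hg : Function.Injective
      (fun p : Fin 4 × Fin (k+1) => f p.1 + ((p.2 : ℕ) : ZMod (4*k+1))) := by
    rintro ⟨i, j⟩ ⟨i', j'⟩ h
    simp only at h
    rcases key_s10 (Nat.lt_succ_iff.mp j.isLt) (Nat.lt_succ_iff.mp j'.isLt) h with heq | hadj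
    · have hii : i = i' := by
        by_contra hii
        exact (hne i i' hii).1 heq
      subst hii
      rw [heq] at h
      have := add_left_cancel h
      have hj : (j : ℕ) = (j' : ℕ) :=
        castInj k _ _ (by have := j.isLt; omega) (by have := j'.isLt; omega) this
      exact Prod.ext rfl (Fin.ext hj)
    · by_cases hii : i = i'
      · subst hii; exact absurd hadj ((cg k).irrefl)
      · exact absurd hadj (hne i i' hii).2
  have hcard := Fintype.card_le_of_injective _ hg
  simp [ZMod.card] at hcard
  omega

/-- The property of containing two triangles sharing an edge. -/
def hasQ {V : Type*} (G : SimpleGraph V) : Prop :=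
  ∃ a b c d : V, c ≠ d ∧ G.Adj a b ∧ G.Adj a c ∧ G.Adj b c ∧ G.Adj a d ∧ G.Adj b d

lemma hasQ_of_iso {V W : Type*} {G : SimpleGraph V} {H : SimpleGraph W} (e : G ≃g H) :
    hasQ G → hasQ H := by
  rintro ⟨a, b, c, d, hcd, h1, h2, h3, h4, h5⟩
  exact ⟨e a, e b, e c, e d, fun h => hcd (e.injective h), e.map_rel_iff.mpr h1,
    e.map_rel_iff.mpr h2, e.map_rel_iff.mpr h3, e.map_rel_iff.mpr h4, e.map_rel_iff.mpr h5⟩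

lemma hasQ_cg2 : hasQ (cg 2) := by
  refine ⟨0, 1, 2, 8, ?_, ?_, ?_, ?_, ?_, ?_⟩ <;> decide

lemma not_hasQ_cg2_compl : ¬ hasQ (cg 2)ᶜ := by
  have : ∀ a b c d : ZMod 9, ¬(c ≠ d ∧ (cg 2)ᶜ.Adj a b ∧ (cg 2)ᶜ.Adj a c ∧ (cg 2)ᶜ.Adj b c ∧
      (cg 2)ᶜ.Adj a d ∧ (cg 2)ᶜ.Adj b d) := by decide
  rintro ⟨a, b, c, d, h⟩
  exact this a b c d h

/-- For every `k ≥ 2`, the degree sequence `((2k)^{4k+1})` is not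
forcibly self-complementary: there exists a `2k`-regular graph on `4k + 1` vertices
that is not self-complementary. -/
theorem regular_not_forcibly (k : ℕ) (hk : 2 ≤ k) :
    ∃ G : SimpleGraph (Fin (4 * k + 1)),
      (∀ v, deg G v = 2 * k) ∧ ¬ IsSelfCompl G := by
  refine ⟨cg k, fun v => deg_cg k v, ?_⟩
  rintro ⟨e⟩
  rcases Nat.lt_or_ge k 3 with h3 | h3
  · have hk2 : k = 2 := by omega
    subst hk2
    exact not_hasQ_cg2_compl (hasQ_of_iso e hasQ_cg2)
  · exact not_hasK4_compl k hk (hasK4_of_iso e (hasK4_cg k h3))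
end
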